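/- Let (X, Π) be a weighted pure d-dimensional simplicial complex. For every 0 ≤ k ≤ d−1 and every −1 ≤ r ≤ k, the up-down walk P∧_k has at most |X(r)| eigenvalues (counted with multiplicity) whose value is strictly greater than 1 − (1/(k+2)) · ∏_{j=r}^{k−1} (1 − γ_j). -/

import Mathlib

open Finset

/-- A weighted pure `d`-dimensional simplicial complex on a finite ground set `V`.
Faces are finsets; a face of cardinality `m` has dimension `m - 1` (so `X(j)` is the
set of faces of cardinality `j + 1`).  The family of faces is downward closed, every
face is contained in a face of cardinality `d + 1` (purity), and a probability
distribution `Π = Π_d` (positive weights summing to `1`) is given on the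
top-dimensional faces. -/
structure WSC (V : Type*) [DecidableEq V] [Fintype V] (d : ℕ) where
  faces : Finset (Finset V)
  empty_mem : ∅ ∈ faces
  down_closed : ∀ β ∈ faces, ∀ α ⊆ β, α ∈ faces
  pure : ∀ α ∈ faces, ∃ β ∈ faces, α ⊆ β ∧ β.card = d + 1
  dim_le : ∀ α ∈ faces, α.card ≤ d + 1
  weight : Finset V → ℝ
  weight_pos : ∀ β ∈ faces, β.card = d + 1 → 0 < weight β
  weight_zero : ∀ β : Finset V, β ∉ faces ∨ β.card ≠ d + 1 → weight β = 0
  weight_sum : ∑ β ∈ faces.filter (fun β => β.card = d + 1), weight β = 1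

namespace WSC

variable {V : Type*} [DecidableEq V] [Fintype V] {d : ℕ}

/-- Auxiliary recursion for the marginal distributions: `Waux X t` is the marginal
distribution `Π_{d - t}` on faces of cardinality `d + 1 - t`, defined by
`Π_j(α) = (1/(j+2)) ∑_{β ∈ X(j+1), β ⊇ α} Π_{j+1}(β)`. -/
noncomputable def Waux (X : WSC V d) : ℕ → Finset V → ℝ
  | 0 => X.weight
  | (t + 1) => fun α =>
      (1 / ((d + 1 - t : ℕ) : ℝ)) *
        ∑ β ∈ X.faces.filter (fun β => α ⊆ β ∧ β.card = d + 1 - t), X.Waux t β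

/-- `X.W m α` is the marginal probability `Π_{m-1}(α)` of the face `α` of cardinality
`m` (dimension `m - 1`). -/
noncomputable def W (X : WSC V d) (m : ℕ) : Finset V → ℝ := X.Waux (d + 1 - m)

/-- The inner product `⟨f, g⟩_{Π_{m-1}}` on `ℝ^{X(m-1)}` (faces of cardinality `m`). -/
noncomputable def inn (X : WSC V d) (m : ℕ) (f g : Finset V → ℝ) : ℝ :=
  ∑ α ∈ X.faces.filter (fun α => α.card = m), X.W m α * f α * g α

/-- The up operator `U_j`: `(U_j f)(β) = (1/(j+2)) ∑_{x ∈ β} f(β \ {x})`, for `β` of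
cardinality `j + 2`.  (The formula is uniform in the cardinality of `β`.) -/
noncomputable def upOp (f : Finset V → ℝ) : Finset V → ℝ :=
  fun β => (1 / (β.card : ℝ)) * ∑ x ∈ β, f (β.erase x)

/-- The down operator `D_{j+1}`:
`(D_{j+1} g)(α) = ∑_{β ∈ X(j+1), β ⊇ α} Π_{j+1}(β) g(β) / ((j+2) Π_j(α))`, for `α` of
cardinality `j + 1`.  (The formula is uniform in the cardinality of `α`.) -/
noncomputable def downOp (X : WSC V d) (g : Finset V → ℝ) : Finset V → ℝ :=
  fun α => ∑ β ∈ X.faces.filter (fun β => α ⊆ β ∧ β.card = α.card + 1),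
      (X.W (α.card + 1) β * g β) / (((α.card : ℝ) + 1) * X.W α.card α)

/-- The down-up walk `P∨_k = U_{k-1} D_k`, acting on functions on `X(k)` (faces of
cardinality `k + 1`). -/
noncomputable def downUp (X : WSC V d) (f : Finset V → ℝ) : Finset V → ℝ :=
  upOp (X.downOp f)

/-- The up-down walk `P∧_k = D_{k+1} U_k`, acting on functions on `X(k)` (faces of
cardinality `k + 1`). -/
noncomputable def upDown (X : WSC V d) (f : Finset V → ℝ) : Finset V → ℝ :=
  X.downOp (upOp f)

/-- The `k`-th non-lazy up-down walk `N_k = ((k+2)/(k+1)) (P∧_k - (1/(k+2)) I)`. -/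
noncomputable def nonLazy (X : WSC V d) (k : ℕ) (f : Finset V → ℝ) : Finset V → ℝ :=
  fun α => (((k : ℝ) + 2) / ((k : ℝ) + 1)) * (X.upDown f α - (1 / ((k : ℝ) + 2)) * f α)

/-- The up-down walk `U_{a,b} = D_{a+1} ⋯ D_b · U_{b-1} ⋯ U_a` on `X(a)` through
`X(b)`, where `t = b - a`. -/
noncomputable def upDownAB (X : WSC V d) (t : ℕ) (f : Finset V → ℝ) : Finset V → ℝ :=
  (X.downOp)^[t] (upOp^[t] f)

/-- The second largest eigenvalue of a row-stochastic operator `M` on `ℝ^{X(m-1)}`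
(faces of cardinality `m`) which is self-adjoint with respect to `⟨·,·⟩_{Π_{m-1}}`
and has stationary distribution `Π_{m-1}`: by the variational principle it is the
supremum of the Rayleigh quotients of (nonzero) functions orthogonal to the
constant function `1`. -/
noncomputable def lam2 (X : WSC V d) (m : ℕ) (M : (Finset V → ℝ) → Finset V → ℝ) : ℝ :=
  sSup { r : ℝ | ∃ f : Finset V → ℝ,
    X.inn m f (fun _ => 1) = 0 ∧ X.inn m f f ≠ 0 ∧
    r = X.inn m f (M f) / X.inn m f f }

/-- The vertices of the link `X_α`: those `x ∉ α` with `α ∪ {x} ∈ X`. -/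
def linkVerts (X : WSC V d) (α : Finset V) : Finset V :=
  Finset.univ.filter (fun x => x ∉ α ∧ insert x α ∈ X.faces)

/-- The link distribution `Π^α_l(τ) = Π_{j+1+l}(α ∪ τ) / (C(|α ∪ τ|, |α|) · Π_j(α))`
for a face `α` of dimension `j` and `τ ∈ X_α(l)`. -/
noncomputable def linkPi (X : WSC V d) (α τ : Finset V) : ℝ :=
  X.W (α ∪ τ).card (α ∪ τ) / ((Nat.choose (α ∪ τ).card α.card : ℝ) * X.W α.card α)

/-- The random walk matrix `M_α` of the graph of the link `X_α`, with entries
`M_α(x, y) = Π^α_1({x, y}) / (2 Π^α_0(x))` for `{x, y} ∈ X_α(1)` and `0` otherwise,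
viewed as an operator on functions on the vertices of the link. -/
noncomputable def linkWalk (X : WSC V d) (α : Finset V) (f : V → ℝ) : V → ℝ :=
  fun x => ∑ y ∈ (X.linkVerts α).filter
      (fun y => y ≠ x ∧ insert y (insert x α) ∈ X.faces),
    (X.linkPi α {x, y} / (2 * X.linkPi α {x})) * f y

/-- The projector `J_α` onto the constant functions on the link: `J_α g` is the
constant function with value `E_{x ∼ Π^α_0}[g(x)]`. -/
noncomputable def linkJ (X : WSC V d) (α : Finset V) (g : V → ℝ) : V → ℝ :=
  fun _ => ∑ x ∈ X.linkVerts α, X.linkPi α {x} * g x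

/-- The inner product `⟨g, h⟩_{Π^α_0}` on functions on the vertices of the link. -/
noncomputable def linkInner (X : WSC V d) (α : Finset V) (g h : V → ℝ) : ℝ :=
  ∑ x ∈ X.linkVerts α, X.linkPi α {x} * g x * h x

/-- The second largest eigenvalue `λ₂(M_α)` of the random walk matrix of the graph
of the link `X_α`, via the variational principle. -/
noncomputable def linkLam2 (X : WSC V d) (α : Finset V) : ℝ :=
  sSup { r : ℝ | ∃ f : V → ℝ,
    X.linkInner α f (fun _ => 1) = 0 ∧ X.linkInner α f f ≠ 0 ∧
    r = X.linkInner α f (X.linkWalk α f) / X.linkInner α f f }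

/-- `X.gammaC m` is `γ_{m-1} = max_{α ∈ X(m-1)} λ₂(M_α)`, the maximum over faces `α`
of cardinality `m` (dimension `m - 1`) of the second eigenvalue of the link walk. -/
noncomputable def gammaC (X : WSC V d) (m : ℕ) : ℝ :=
  sSup { r : ℝ | ∃ α ∈ X.faces, α.card = m ∧ r = X.linkLam2 α }

end WSC

namespace WSC

variable {V : Type*} [DecidableEq V] [Fintype V] {d : ℕ}

lemma W_rec (X : WSC V d) {s : ℕ} (hs : s ≤ d) (α : Finset V) :
    X.W s α = (1 / ((s : ℝ) + 1)) *
      ∑ β ∈ X.faces.filter (fun β => α ⊆ β ∧ β.card = s + 1), X.W (s + 1) β := by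
  have h1 : d + 1 - s = (d - s) + 1 := by omega
  have h2 : d + 1 - (d - s) = s + 1 := by omega
  have h3 : d + 1 - (s + 1) = d - s := by omega
  have e1 : X.W s α = X.Waux ((d - s) + 1) α := by rw [W, h1]
  have e2 : X.W (s + 1) = X.Waux (d - s) := by rw [W, h3]
  rw [e1, e2]
  simp only [Waux, h2]
  push_cast
  rfl

lemma sum_W_eq (X : WSC V d) {s : ℕ} (hs : s ≤ d) (α : Finset V) :
    ∑ β ∈ X.faces.filter (fun β => α ⊆ β ∧ β.card = s + 1), X.W (s + 1) β
      = ((s : ℝ) + 1) * X.W s α := by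
  rw [X.W_rec hs α]
  have : ((s : ℝ) + 1) ≠ 0 := by positivity
  field_simp

lemma Waux_pos (X : WSC V d) : ∀ t, t ≤ d + 1 → ∀ α ∈ X.faces, α.card = d + 1 - t →
    0 < X.Waux t α := by
  intro t
  induction t with
  | zero =>
    intro _ α hα hc
    exact X.weight_pos α hα (by simpa using hc)
  | succ t ih =>
    intro ht α hα hc
    simp only [Waux]
    apply mul_pos
    · have h1 : 1 ≤ d + 1 - t := by omega
      have : (0 : ℝ) < ((d + 1 - t : ℕ) : ℝ) := by exact_mod_cast h1
      positivity
    · apply Finset.sum_pos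
      · intro β hβ
        simp only [Finset.mem_filter] at hβ
        exact ih (by omega) β hβ.1 hβ.2.2
      · obtain ⟨T, hT, hsub, hcard⟩ := X.pure α hα
        obtain ⟨u, hau, huT, hucard⟩ := Finset.exists_subsuperset_card_eq (n := 1 + α.card) hsub
          (by omega) (by omega : 1 + α.card ≤ T.card)
        refine ⟨u, ?_⟩
        simp only [Finset.mem_filter]
        exact ⟨X.down_closed T hT u huT, hau, by omega⟩

lemma W_pos (X : WSC V d) {α : Finset V} (hα : α ∈ X.faces) : 0 < X.W α.card α := by
  have hle := X.dim_le α hα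
  exact X.Waux_pos (d + 1 - α.card) (by omega) α hα (by omega)

lemma W_pos' (X : WSC V d) {α : Finset V} (hα : α ∈ X.faces) {m : ℕ} (hc : α.card = m) :
    0 < X.W m α := by subst hc; exact X.W_pos hα

lemma inn_nonneg (X : WSC V d) (m : ℕ) (f : Finset V → ℝ) : 0 ≤ X.inn m f f := by
  apply Finset.sum_nonneg
  intro α hα
  simp only [Finset.mem_filter] at hα
  have := X.W_pos' hα.1 hα.2
  rw [mul_assoc]
  exact mul_nonneg this.le (mul_self_nonneg _)

lemma inn_CS (X : WSC V d) (m : ℕ) (f g : Finset V → ℝ) :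
    (X.inn m f g) ^ 2 ≤ X.inn m f f * X.inn m g g := by
  unfold inn
  have h := Finset.sum_mul_sq_le_sq_mul_sq (X.faces.filter (fun α => α.card = m))
    (fun α => Real.sqrt (X.W m α) * f α) (fun α => Real.sqrt (X.W m α) * g α)
  have hW : ∀ α ∈ X.faces.filter (fun α => α.card = m),
      Real.sqrt (X.W m α) * Real.sqrt (X.W m α) = X.W m α := by
    intro α hα
    simp only [Finset.mem_filter] at hα
    exact Real.mul_self_sqrt (X.W_pos' hα.1 hα.2).le
  calc (∑ α ∈ X.faces.filter (fun α => α.card = m), X.W m α * f α * g α) ^ 2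
      = (∑ α ∈ X.faces.filter (fun α => α.card = m),
          (Real.sqrt (X.W m α) * f α) * (Real.sqrt (X.W m α) * g α)) ^ 2 := by
        congr 1
        apply Finset.sum_congr rfl
        intro α hα
        rw [show (Real.sqrt (X.W m α) * f α) * (Real.sqrt (X.W m α) * g α)
            = (Real.sqrt (X.W m α) * Real.sqrt (X.W m α)) * f α * g α by ring, hW α hα]
    _ ≤ (∑ α ∈ X.faces.filter (fun α => α.card = m), (Real.sqrt (X.W m α) * f α) ^ 2)
          * ∑ α ∈ X.faces.filter (fun α => α.card = m), (Real.sqrt (X.W m α) * g α) ^ 2 := h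
    _ = _ := by
        have hWnn : ∀ α ∈ X.faces.filter (fun α => α.card = m), 0 ≤ X.W m α := by
          intro α hα; simp only [Finset.mem_filter] at hα; exact (X.W_pos' hα.1 hα.2).le
        congr 1 <;> apply Finset.sum_congr rfl <;> intro α hα <;>
          rw [mul_pow, Real.sq_sqrt (hWnn α hα)] <;> ring

lemma filter_sub_eq_image (X : WSC V d) {β : Finset V} (hβ : β ∈ X.faces) {s : ℕ}
    (hc : β.card = s + 1) :
    X.faces.filter (fun a => a ⊆ β ∧ a.card = s) = β.image (fun x => β.erase x) := by
  ext γ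
  simp only [Finset.mem_filter, Finset.mem_image]
  constructor
  · rintro ⟨hγf, hγβ, hγc⟩
    have hss : γ ⊂ β := by
      refine Finset.ssubset_iff_subset_ne.2 ⟨hγβ, ?_⟩
      intro h; rw [h] at hγc; omega
    obtain ⟨x, hxβ, hxγ⟩ := Finset.exists_of_ssubset hss
    refine ⟨x, hxβ, ?_⟩
    have h1 : γ ⊆ β.erase x := Finset.subset_erase.2 ⟨hγβ, hxγ⟩
    have h2 : (β.erase x).card = s := by rw [Finset.card_erase_of_mem hxβ, hc]; omega
    exact (Finset.eq_of_subset_of_card_le h1 (by omega)).symm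
  · rintro ⟨x, hx, rfl⟩
    refine ⟨X.down_closed β hβ _ (Finset.erase_subset _ _), Finset.erase_subset _ _, ?_⟩
    rw [Finset.card_erase_of_mem hx, hc]; omega

lemma sum_erase_eq (X : WSC V d) {β : Finset V} (hβ : β ∈ X.faces) {s : ℕ}
    (hc : β.card = s + 1) (g : Finset V → ℝ) :
    ∑ x ∈ β, g (β.erase x) = ∑ a ∈ X.faces.filter (fun a => a ⊆ β ∧ a.card = s), g a := by
  rw [X.filter_sub_eq_image hβ hc, Finset.sum_image]
  intro x hx y hy hxy
  by_contra hne
  have h' : x ∈ β.erase y := Finset.mem_erase.2 ⟨hne, hx⟩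
  rw [← show β.erase x = β.erase y from hxy] at h'
  exact (Finset.mem_erase.1 h').1 rfl

lemma sum_pair_swap (X : WSC V d) (s : ℕ) (T : Finset V → Finset V → ℝ) :
    ∑ β ∈ X.faces.filter (fun b => b.card = s + 1),
      ∑ a ∈ X.faces.filter (fun a => a ⊆ β ∧ a.card = s), T a β
    = ∑ a ∈ X.faces.filter (fun a => a.card = s),
        ∑ β ∈ X.faces.filter (fun b => a ⊆ b ∧ b.card = s + 1), T a β := by
  rw [Finset.sum_sigma', Finset.sum_sigma']
  apply Finset.sum_nbij' (i := fun p => (⟨p.2, p.1⟩ : (_ : Finset V) × Finset V))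
    (j := fun p => (⟨p.2, p.1⟩ : (_ : Finset V) × Finset V))
  · rintro ⟨β, a⟩ hp
    simp only [Finset.mem_sigma, Finset.mem_filter] at hp ⊢
    obtain ⟨⟨hβf, hβc⟩, haf, hab, hac⟩ := hp
    exact ⟨⟨haf, hac⟩, hβf, hab, hβc⟩
  · rintro ⟨a, β⟩ hp
    simp only [Finset.mem_sigma, Finset.mem_filter] at hp ⊢
    obtain ⟨⟨haf, hac⟩, hβf, hab, hβc⟩ := hp
    exact ⟨⟨hβf, hβc⟩, haf, hab, hac⟩
  · rintro ⟨β, a⟩ _; rfl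
  · rintro ⟨a, β⟩ _; rfl
  · rintro ⟨β, a⟩ _; rfl

end WSC


set_option linter.unusedSectionVars false

namespace WSC

variable {V : Type*} [DecidableEq V] [Fintype V] {d : ℕ}

lemma union_single (α : Finset V) (x : V) : α ∪ {x} = insert x α := by
  ext a; simp [or_comm]

lemma union_pair (α : Finset V) (x y : V) : α ∪ {x, y} = insert y (insert x α) := by
  ext a; simp only [Finset.mem_union, Finset.mem_insert, Finset.mem_singleton]; tauto

lemma mem_linkVerts (X : WSC V d) {α : Finset V} {x : V} :
    x ∈ X.linkVerts α ↔ x ∉ α ∧ insert x α ∈ X.faces := by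
  simp [linkVerts]

lemma linkVerts_image (X : WSC V d) (α : Finset V) :
    X.faces.filter (fun b => α ⊆ b ∧ b.card = α.card + 1)
      = (X.linkVerts α).image (fun x => insert x α) := by
  ext β
  simp only [Finset.mem_filter, Finset.mem_image, mem_linkVerts]
  constructor
  · rintro ⟨hβf, hsub, hcard⟩
    have hss : α ⊂ β := by
      refine Finset.ssubset_iff_subset_ne.2 ⟨hsub, ?_⟩
      intro h; rw [h] at hcard; omega
    obtain ⟨x, hxβ, hxα⟩ := Finset.exists_of_ssubset hss
    have h1 : insert x α ⊆ β := Finset.insert_subset hxβ hsub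
    have h2 : (insert x α).card = α.card + 1 := Finset.card_insert_of_notMem hxα
    have h3 : insert x α = β := Finset.eq_of_subset_of_card_le h1 (by omega)
    exact ⟨x, ⟨hxα, h3 ▸ hβf⟩, h3⟩
  · rintro ⟨x, ⟨hxα, hf⟩, rfl⟩
    exact ⟨hf, Finset.subset_insert _ _, Finset.card_insert_of_notMem hxα⟩

lemma sum_linkVerts_eq (X : WSC V d) (α : Finset V) (G : Finset V → ℝ) :
    ∑ x ∈ X.linkVerts α, G (insert x α)
      = ∑ β ∈ X.faces.filter (fun b => α ⊆ b ∧ b.card = α.card + 1), G β := by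
  rw [X.linkVerts_image α, Finset.sum_image]
  intro x hx y hy hxy
  rw [Finset.mem_coe, X.mem_linkVerts] at hx hy
  have : x ∈ insert y α := (show insert x α = insert y α from hxy) ▸ Finset.mem_insert_self x α
  rcases Finset.mem_insert.1 this with h | h
  · exact h
  · exact absurd h hx.1

lemma fil_eq_linkVerts (X : WSC V d) (α : Finset V) (x : V) :
    (X.linkVerts α).filter (fun y => y ≠ x ∧ insert y (insert x α) ∈ X.faces)
      = X.linkVerts (insert x α) := by
  ext y
  simp only [Finset.mem_filter, mem_linkVerts, Finset.mem_insert]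
  constructor
  · rintro ⟨⟨hyα, _⟩, hyx, hf⟩
    exact ⟨by tauto, hf⟩
  · rintro ⟨hy, hf⟩
    push_neg at hy
    refine ⟨⟨hy.2, X.down_closed _ hf _ ?_⟩, hy.1, hf⟩
    intro a ha
    simp only [Finset.mem_insert] at ha ⊢
    tauto

lemma linkPi_single (X : WSC V d) {α : Finset V} {x : V} (hx : x ∉ α) {m : ℕ}
    (hc : α.card = m) :
    X.linkPi α {x} = X.W (m + 1) (insert x α) / (((m : ℝ) + 1) * X.W m α) := by
  unfold linkPi
  rw [union_single, Finset.card_insert_of_notMem hx, hc, Nat.choose_succ_self_right]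
  push_cast
  rfl

lemma choose_cast (m : ℕ) :
    ((Nat.choose (m + 2) m : ℕ) : ℝ) * 2 = ((m : ℝ) + 2) * ((m : ℝ) + 1) := by
  have h1 : Nat.choose (m + 2) m = Nat.choose (m + 2) 2 := by
    have h := Nat.choose_symm (n := m + 2) (k := 2) (by omega)
    simpa using h
  have hdvd : 2 ∣ (m + 2) * (m + 1) := by
    rcases Nat.even_or_odd m with h | h
    · obtain ⟨c, hc⟩ := h
      exact ⟨(c + 1) * (m + 1), by subst hc; ring⟩
    · obtain ⟨c, hc⟩ := h
      exact ⟨(m + 2) * (c + 1), by subst hc; ring⟩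
  have h2 : Nat.choose (m + 2) 2 * 2 = (m + 2) * (m + 1) := by
    rw [Nat.choose_two_right]
    have h3 : m + 2 - 1 = m + 1 := by omega
    rw [h3]
    exact Nat.div_mul_cancel hdvd
  rw [h1]
  have h4 := congrArg (fun n : ℕ => (n : ℝ)) h2
  push_cast at h4
  linarith

lemma choose_cast' (m : ℕ) :
    ((Nat.choose (m + 2) m : ℕ) : ℝ) = ((m : ℝ) + 2) * ((m : ℝ) + 1) / 2 := by
  rw [eq_div_iff (two_ne_zero)]
  exact choose_cast m

lemma linkPi_pair (X : WSC V d) {α : Finset V} (hα : α ∈ X.faces) {x y : V} (hx : x ∉ α)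
    (hy : y ∉ α) (hyx : y ≠ x) {m : ℕ} (hc : α.card = m) :
    X.linkPi α {x, y} / 2
      = X.W (m + 2) (insert y (insert x α)) / ((((m : ℝ) + 2) * ((m : ℝ) + 1)) * X.W m α) := by
  unfold linkPi
  have hym : y ∉ insert x α := by simp [Finset.mem_insert, hy, hyx]
  rw [union_pair, Finset.card_insert_of_notMem hym, Finset.card_insert_of_notMem hx, hc,
    choose_cast' m]
  have hW := X.W_pos' hα hc
  have hm2 : (0:ℝ) < ((m : ℝ) + 2) * ((m : ℝ) + 1) := by positivity
  field_simp

end WSC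


namespace WSC

variable {V : Type*} [DecidableEq V] [Fintype V] {d : ℕ}

lemma linkPi_single_pos (X : WSC V d) {α : Finset V} (hα : α ∈ X.faces) {x : V}
    (hx : x ∈ X.linkVerts α) : 0 < X.linkPi α {x} := by
  rw [X.mem_linkVerts] at hx
  rw [X.linkPi_single hx.1 rfl]
  have h1 := X.W_pos' hx.2 (Finset.card_insert_of_notMem hx.1)
  have h2 := X.W_pos hα
  positivity

lemma linkPi_pair_pos (X : WSC V d) {α : Finset V} (hα : α ∈ X.faces) {x y : V}
    (hx : x ∈ X.linkVerts α) (hy : y ∈ (X.linkVerts α).filter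
      (fun y => y ≠ x ∧ insert y (insert x α) ∈ X.faces)) : 0 < X.linkPi α {x, y} := by
  simp only [Finset.mem_filter, X.mem_linkVerts] at hx hy
  have hyx : y ≠ x := hy.2.1
  have h2 : (0:ℝ) < X.linkPi α {x, y} / 2 := by
    rw [X.linkPi_pair hα hx.1 hy.1.1 hyx rfl]
    have hym : y ∉ insert x α := by simp [Finset.mem_insert, hy.1.1, hyx]
    have hb := X.W_pos' hy.2.2 (by
      rw [Finset.card_insert_of_notMem hym, Finset.card_insert_of_notMem hx.1])
    have hW := X.W_pos hα
    positivity
  linarith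

lemma vert_total (X : WSC V d) {α : Finset V} (hα : α ∈ X.faces) {m : ℕ}
    (hc : α.card = m) (hm : m ≤ d) :
    ∑ x ∈ X.linkVerts α, X.linkPi α {x} = 1 := by
  have h1 : ∀ x ∈ X.linkVerts α,
      X.linkPi α {x} = X.W (m + 1) (insert x α) / (((m : ℝ) + 1) * X.W m α) := by
    intro x hx
    rw [X.mem_linkVerts] at hx
    exact X.linkPi_single hx.1 hc
  rw [Finset.sum_congr rfl h1,
    X.sum_linkVerts_eq α (fun β => X.W (m + 1) β / (((m : ℝ) + 1) * X.W m α))]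
  rw [show α.card = m from hc, ← Finset.sum_div, X.sum_W_eq hm α]
  have hW := X.W_pos' hα hc
  field_simp

lemma rowsum_half (X : WSC V d) {α : Finset V} (hα : α ∈ X.faces) {m : ℕ}
    (hc : α.card = m) (hmd : m + 1 ≤ d) {x : V} (hx : x ∈ X.linkVerts α) :
    ∑ y ∈ (X.linkVerts α).filter (fun y => y ≠ x ∧ insert y (insert x α) ∈ X.faces),
      X.linkPi α {x, y} / 2 = X.linkPi α {x} := by
  have hxm := (X.mem_linkVerts.1 hx)
  have h1 : ∀ y ∈ (X.linkVerts α).filter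
      (fun y => y ≠ x ∧ insert y (insert x α) ∈ X.faces),
      X.linkPi α {x, y} / 2
        = X.W (m + 2) (insert y (insert x α)) / ((((m : ℝ) + 2) * ((m : ℝ) + 1)) * X.W m α) := by
    intro y hy
    simp only [Finset.mem_filter, X.mem_linkVerts] at hy
    exact X.linkPi_pair hα hxm.1 hy.1.1 hy.2.1 hc
  rw [Finset.sum_congr rfl h1, X.fil_eq_linkVerts α x,
    X.sum_linkVerts_eq (insert x α)
      (fun β => X.W (m + 2) β / ((((m : ℝ) + 2) * ((m : ℝ) + 1)) * X.W m α))]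
  have hcx : (insert x α).card = m + 1 := by rw [Finset.card_insert_of_notMem hxm.1, hc]
  rw [hcx, ← Finset.sum_div, X.sum_W_eq hmd (insert x α)]
  rw [X.linkPi_single hxm.1 hc]
  have hW := X.W_pos' hα hc
  have hW1 := X.W_pos' hxm.2 hcx
  push_cast
  field_simp
  ring

lemma linkQuad (X : WSC V d) {α : Finset V} (hα : α ∈ X.faces) (a b : V → ℝ) :
    X.linkInner α a (X.linkWalk α b)
      = ∑ x ∈ X.linkVerts α,
          ∑ y ∈ (X.linkVerts α).filter (fun y => y ≠ x ∧ insert y (insert x α) ∈ X.faces),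
            (X.linkPi α {x, y} / 2) * a x * b y := by
  unfold linkInner linkWalk
  apply Finset.sum_congr rfl
  intro x hx
  have hpos := X.linkPi_single_pos hα hx
  rw [Finset.mul_sum]
  apply Finset.sum_congr rfl
  intro y _
  field_simp

lemma sum_pairs_swap (X : WSC V d) (α : Finset V) (T : V → V → ℝ) :
    ∑ x ∈ X.linkVerts α,
      ∑ y ∈ (X.linkVerts α).filter (fun y => y ≠ x ∧ insert y (insert x α) ∈ X.faces), T x y
    = ∑ x ∈ X.linkVerts α,
        ∑ y ∈ (X.linkVerts α).filter (fun y => y ≠ x ∧ insert y (insert x α) ∈ X.faces),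
          T y x := by
  rw [Finset.sum_sigma', Finset.sum_sigma']
  apply Finset.sum_nbij' (i := fun p => (⟨p.2, p.1⟩ : (_ : V) × V))
    (j := fun p => (⟨p.2, p.1⟩ : (_ : V) × V))
  · rintro ⟨x, y⟩ hp
    simp only [Finset.mem_sigma, Finset.mem_filter, X.mem_linkVerts] at hp ⊢
    obtain ⟨⟨hx1, hx2⟩, ⟨hy1, hy2⟩, hyx, hf⟩ := hp
    refine ⟨⟨hy1, hy2⟩, ⟨hx1, hx2⟩, fun h => hyx h.symm, ?_⟩
    rwa [Finset.insert_comm]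
  · rintro ⟨x, y⟩ hp
    simp only [Finset.mem_sigma, Finset.mem_filter, X.mem_linkVerts] at hp ⊢
    obtain ⟨⟨hx1, hx2⟩, ⟨hy1, hy2⟩, hyx, hf⟩ := hp
    refine ⟨⟨hy1, hy2⟩, ⟨hx1, hx2⟩, fun h => hyx h.symm, ?_⟩
    rwa [Finset.insert_comm]
  · rintro ⟨x, y⟩ _; rfl
  · rintro ⟨x, y⟩ _; rfl
  · rintro ⟨x, y⟩ _; rfl

lemma linkQuad_symm (X : WSC V d) {α : Finset V} (hα : α ∈ X.faces) (a b : V → ℝ) :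
    X.linkInner α a (X.linkWalk α b) = X.linkInner α b (X.linkWalk α a) := by
  rw [X.linkQuad hα a b, X.linkQuad hα b a,
    X.sum_pairs_swap α (fun x y => (X.linkPi α {x, y} / 2) * a x * b y)]
  apply Finset.sum_congr rfl; intro x _
  apply Finset.sum_congr rfl; intro y _
  rw [Finset.pair_comm y x]
  ring

lemma linkInner_self_nonneg (X : WSC V d) {α : Finset V} (hα : α ∈ X.faces) (g : V → ℝ) :
    0 ≤ X.linkInner α g g := by
  apply Finset.sum_nonneg
  intro x hx
  rw [mul_assoc]
  exact mul_nonneg (X.linkPi_single_pos hα hx).le (mul_self_nonneg _)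

lemma linkRayleigh_le (X : WSC V d) {α : Finset V} (hα : α ∈ X.faces) {m : ℕ}
    (hc : α.card = m) (hmd : m + 1 ≤ d) (g : V → ℝ) :
    X.linkInner α g (X.linkWalk α g) ≤ X.linkInner α g g := by
  rw [X.linkQuad hα g g]
  have key : ∀ x ∈ X.linkVerts α,
      ∑ y ∈ (X.linkVerts α).filter (fun y => y ≠ x ∧ insert y (insert x α) ∈ X.faces),
        (X.linkPi α {x, y} / 2) * g x * g y
      ≤ ∑ y ∈ (X.linkVerts α).filter (fun y => y ≠ x ∧ insert y (insert x α) ∈ X.faces),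
        (X.linkPi α {x, y} / 2) * (g x ^ 2 + g y ^ 2) / 2 := by
    intro x hx
    apply Finset.sum_le_sum
    intro y hy
    have hpos := X.linkPi_pair_pos hα hx hy
    nlinarith [sq_nonneg (g x - g y)]
  calc ∑ x ∈ X.linkVerts α, ∑ y ∈ _, (X.linkPi α {x, y} / 2) * g x * g y
      ≤ ∑ x ∈ X.linkVerts α,
          ∑ y ∈ (X.linkVerts α).filter (fun y => y ≠ x ∧ insert y (insert x α) ∈ X.faces),
            (X.linkPi α {x, y} / 2) * (g x ^ 2 + g y ^ 2) / 2 :=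
        Finset.sum_le_sum key
    _ = (∑ x ∈ X.linkVerts α,
          ∑ y ∈ (X.linkVerts α).filter (fun y => y ≠ x ∧ insert y (insert x α) ∈ X.faces),
            (X.linkPi α {x, y} / 2) * g x ^ 2 / 2)
        + ∑ x ∈ X.linkVerts α,
          ∑ y ∈ (X.linkVerts α).filter (fun y => y ≠ x ∧ insert y (insert x α) ∈ X.faces),
            (X.linkPi α {x, y} / 2) * g y ^ 2 / 2 := by
        rw [← Finset.sum_add_distrib]
        apply Finset.sum_congr rfl; intro x _
        rw [← Finset.sum_add_distrib]
        apply Finset.sum_congr rfl; intro y _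
        ring
    _ = (∑ x ∈ X.linkVerts α,
          ∑ y ∈ (X.linkVerts α).filter (fun y => y ≠ x ∧ insert y (insert x α) ∈ X.faces),
            (X.linkPi α {x, y} / 2) * g x ^ 2 / 2) * 2 := by
        rw [X.sum_pairs_swap α (fun x y => (X.linkPi α {x, y} / 2) * g y ^ 2 / 2)]
        have h2 : ∑ x ∈ X.linkVerts α,
            ∑ y ∈ (X.linkVerts α).filter (fun y => y ≠ x ∧ insert y (insert x α) ∈ X.faces),
              (X.linkPi α {y, x} / 2) * g x ^ 2 / 2
            = ∑ x ∈ X.linkVerts α,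
              ∑ y ∈ (X.linkVerts α).filter (fun y => y ≠ x ∧ insert y (insert x α) ∈ X.faces),
                (X.linkPi α {x, y} / 2) * g x ^ 2 / 2 := by
          apply Finset.sum_congr rfl; intro x _
          apply Finset.sum_congr rfl; intro y _
          rw [Finset.pair_comm y x]
        rw [h2]; ring
    _ = ∑ x ∈ X.linkVerts α, X.linkPi α {x} * g x ^ 2 := by
        rw [Finset.sum_mul]
        apply Finset.sum_congr rfl; intro x hx
        have hr := X.rowsum_half hα hc hmd hx
        calc (∑ y ∈ (X.linkVerts α).filter
                (fun y => y ≠ x ∧ insert y (insert x α) ∈ X.faces),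
                (X.linkPi α {x, y} / 2) * g x ^ 2 / 2) * 2
            = (∑ y ∈ (X.linkVerts α).filter
                (fun y => y ≠ x ∧ insert y (insert x α) ∈ X.faces),
                X.linkPi α {x, y} / 2) * g x ^ 2 := by
              rw [Finset.sum_mul, Finset.sum_mul]
              apply Finset.sum_congr rfl; intro y _; ring
          _ = X.linkPi α {x} * g x ^ 2 := by rw [hr]
    _ = X.linkInner α g g := by
        unfold linkInner
        apply Finset.sum_congr rfl; intro x _
        ring

end WSC


namespace WSC

variable {V : Type*} [DecidableEq V] [Fintype V] {d : ℕ}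

lemma linkLam2_bdd (X : WSC V d) {α : Finset V} (hα : α ∈ X.faces) {m : ℕ}
    (hc : α.card = m) (hmd : m + 1 ≤ d) :
    BddAbove { r : ℝ | ∃ f : V → ℝ,
      X.linkInner α f (fun _ => 1) = 0 ∧ X.linkInner α f f ≠ 0 ∧
      r = X.linkInner α f (X.linkWalk α f) / X.linkInner α f f } := by
  refine ⟨1, ?_⟩
  rintro r ⟨f, _, hf2, rfl⟩
  have hden : 0 < X.linkInner α f f :=
    lt_of_le_of_ne (X.linkInner_self_nonneg hα f) (Ne.symm hf2)
  rw [div_le_one hden]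
  exact X.linkRayleigh_le hα hc hmd f

lemma linkLam2_le_one (X : WSC V d) {α : Finset V} (hα : α ∈ X.faces) {m : ℕ}
    (hc : α.card = m) (hmd : m + 1 ≤ d) : X.linkLam2 α ≤ 1 := by
  apply Real.sSup_le _ zero_le_one
  rintro r ⟨f, _, hf2, rfl⟩
  have hden : 0 < X.linkInner α f f :=
    lt_of_le_of_ne (X.linkInner_self_nonneg hα f) (Ne.symm hf2)
  rw [div_le_one hden]
  exact X.linkRayleigh_le hα hc hmd f

lemma linkLam2_le_gammaC (X : WSC V d) {α : Finset V} (hα : α ∈ X.faces) {m : ℕ}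
    (hc : α.card = m) (hmd : m + 1 ≤ d) : X.linkLam2 α ≤ X.gammaC m := by
  apply le_csSup
  · refine ⟨1, ?_⟩
    rintro r ⟨α', hα', hc', rfl⟩
    exact X.linkLam2_le_one hα' hc' hmd
  · exact ⟨α, hα, hc, rfl⟩

lemma gammaC_le_one (X : WSC V d) {m : ℕ} (hmd : m + 1 ≤ d) : X.gammaC m ≤ 1 := by
  apply Real.sSup_le _ zero_le_one
  rintro r ⟨α', hα', hc', rfl⟩
  exact X.linkLam2_le_one hα' hc' hmd

lemma rowsum_one (X : WSC V d) {α : Finset V} (hα : α ∈ X.faces) {m : ℕ}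
    (hc : α.card = m) (hmd : m + 1 ≤ d) {x : V} (hx : x ∈ X.linkVerts α) :
    ∑ y ∈ (X.linkVerts α).filter (fun y => y ≠ x ∧ insert y (insert x α) ∈ X.faces),
      X.linkPi α {x, y} / (2 * X.linkPi α {x}) = 1 := by
  have h := X.rowsum_half hα hc hmd hx
  have hpos := X.linkPi_single_pos hα hx
  have h1 : ∀ y ∈ (X.linkVerts α).filter
      (fun y => y ≠ x ∧ insert y (insert x α) ∈ X.faces),
      X.linkPi α {x, y} / (2 * X.linkPi α {x})
        = (X.linkPi α {x, y} / 2) / X.linkPi α {x} := by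
    intro y _; rw [div_div]
  rw [Finset.sum_congr rfl h1, ← Finset.sum_div, h]
  field_simp

lemma walk_shift (X : WSC V d) {α : Finset V} (hα : α ∈ X.faces) {m : ℕ}
    (hc : α.card = m) (hmd : m + 1 ≤ d) (g : V → ℝ) (c : ℝ) {x : V}
    (hx : x ∈ X.linkVerts α) :
    X.linkWalk α (fun z => g z + c) x = X.linkWalk α g x + c := by
  unfold linkWalk
  have h1 : ∀ y ∈ (X.linkVerts α).filter
      (fun y => y ≠ x ∧ insert y (insert x α) ∈ X.faces),
      X.linkPi α {x, y} / (2 * X.linkPi α {x}) * (g y + c)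
        = X.linkPi α {x, y} / (2 * X.linkPi α {x}) * g y
          + c * (X.linkPi α {x, y} / (2 * X.linkPi α {x})) := by
    intro y _; ring
  rw [Finset.sum_congr rfl h1, Finset.sum_add_distrib, ← Finset.mul_sum,
    X.rowsum_one hα hc hmd hx, mul_one]

lemma walk_const (X : WSC V d) {α : Finset V} (hα : α ∈ X.faces) {m : ℕ}
    (hc : α.card = m) (hmd : m + 1 ≤ d) (c : ℝ) {x : V} (hx : x ∈ X.linkVerts α) :
    X.linkWalk α (fun _ => c) x = c := by
  unfold linkWalk
  rw [← Finset.sum_mul, X.rowsum_one hα hc hmd hx, one_mul]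

lemma link_bound (X : WSC V d) {α : Finset V} (hα : α ∈ X.faces) {m : ℕ}
    (hc : α.card = m) (hmd : m + 1 ≤ d) (g : V → ℝ) :
    X.linkInner α g (X.linkWalk α g)
      ≤ X.gammaC m * X.linkInner α g g
        + (1 - X.gammaC m) * (∑ x ∈ X.linkVerts α, X.linkPi α {x} * g x) ^ 2 := by
  have htot := X.vert_total hα hc (by omega)
  set c : ℝ := ∑ x ∈ X.linkVerts α, X.linkPi α {x} * g x with hcdef
  set g' : V → ℝ := fun x => g x - c with hg'def
  have hgg' : ∀ x, g x = g' x + c := by intro x; simp [hg'def]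
  -- ⟨g', 1⟩ = 0
  have horth : X.linkInner α g' (fun _ => 1) = 0 := by
    unfold linkInner
    have h1 : ∀ x ∈ X.linkVerts α, X.linkPi α {x} * g' x * 1
        = X.linkPi α {x} * g x - c * X.linkPi α {x} := by
      intro x _; simp [hg'def]; ring
    rw [Finset.sum_congr rfl h1, Finset.sum_sub_distrib, ← Finset.mul_sum, htot, ← hcdef]
    ring
  -- ‖g‖² = ‖g'‖² + c²
  have hnorm : X.linkInner α g g = X.linkInner α g' g' + c ^ 2 := by
    unfold linkInner
    have h1 : ∀ x ∈ X.linkVerts α, X.linkPi α {x} * g x * g x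
        = X.linkPi α {x} * g' x * g' x
          + (2 * c * (X.linkPi α {x} * g x) - c ^ 2 * X.linkPi α {x}) := by
      intro x _; simp [hg'def]; ring
    rw [Finset.sum_congr rfl h1, Finset.sum_add_distrib, Finset.sum_sub_distrib,
      ← Finset.mul_sum, ← Finset.mul_sum, htot, ← hcdef]
    ring
  -- walk decomposition
  have hwalk : ∀ x ∈ X.linkVerts α, X.linkWalk α g x = X.linkWalk α g' x + c := by
    intro x hx
    have := X.walk_shift hα hc hmd g' c hx
    rw [show (fun z => g' z + c) = g from by funext z; rw [hgg' z]] at this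
    exact this
  -- ⟨1, M g'⟩ = 0
  have hone : X.linkInner α (fun _ => 1) (X.linkWalk α g') = 0 := by
    rw [X.linkQuad_symm hα]
    unfold linkInner
    have h1 : ∀ x ∈ X.linkVerts α,
        X.linkPi α {x} * g' x * X.linkWalk α (fun _ => (1:ℝ)) x
          = X.linkPi α {x} * g' x * 1 := by
      intro x hx; rw [X.walk_const hα hc hmd 1 hx]
    rw [Finset.sum_congr rfl h1]
    exact horth
  -- ⟨g, M g⟩ = ⟨g', M g'⟩ + c²
  have hquad : X.linkInner α g (X.linkWalk α g)
      = X.linkInner α g' (X.linkWalk α g') + c ^ 2 := by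
    unfold linkInner
    have h1 : ∀ x ∈ X.linkVerts α,
        X.linkPi α {x} * g x * X.linkWalk α g x
          = X.linkPi α {x} * g' x * X.linkWalk α g' x
            + (c * (X.linkPi α {x} * g' x * 1)
               + c * (X.linkPi α {x} * 1 * X.linkWalk α g' x)
               + c ^ 2 * X.linkPi α {x}) := by
      intro x hx
      rw [hwalk x hx, hgg' x]
      ring
    rw [Finset.sum_congr rfl h1, Finset.sum_add_distrib]
    have h2 : ∑ x ∈ X.linkVerts α,
        (c * (X.linkPi α {x} * g' x * 1) + c * (X.linkPi α {x} * 1 * X.linkWalk α g' x)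
          + c ^ 2 * X.linkPi α {x})
        = c * X.linkInner α g' (fun _ => 1)
          + c * X.linkInner α (fun _ => 1) (X.linkWalk α g') + c ^ 2 := by
      unfold linkInner
      rw [Finset.sum_add_distrib, Finset.sum_add_distrib, ← Finset.mul_sum, ← Finset.mul_sum,
        ← Finset.mul_sum, htot]
      simp
    rw [h2, horth, hone]
    ring
  -- main bound on ⟨g', M g'⟩
  have hA : X.linkInner α g' (X.linkWalk α g') ≤ X.gammaC m * X.linkInner α g' g' := by
    rcases eq_or_ne (X.linkInner α g' g') 0 with h0 | h0
    · have hz : ∀ x ∈ X.linkVerts α, g' x = 0 := by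
        intro x hx
        have hnn : ∀ y ∈ X.linkVerts α, 0 ≤ X.linkPi α {y} * g' y * g' y := by
          intro y hy; rw [mul_assoc]
          exact mul_nonneg (X.linkPi_single_pos hα hy).le (mul_self_nonneg _)
        have hth := (Finset.sum_eq_zero_iff_of_nonneg hnn).1 h0 x hx
        have hpos := X.linkPi_single_pos hα hx
        have h'' : g' x * g' x = 0 := by
          by_contra hne
          have hne2 : X.linkPi α {x} * (g' x * g' x) ≠ 0 :=
            mul_ne_zero (ne_of_gt hpos) hne
          rw [← mul_assoc] at hne2
          exact hne2 hth
        exact mul_self_eq_zero.1 h''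
      have hz2 : X.linkInner α g' (X.linkWalk α g') = 0 := by
        unfold linkInner
        apply Finset.sum_eq_zero
        intro x hx; rw [hz x hx]; ring
      rw [hz2, h0, mul_zero]
    · have hden : 0 < X.linkInner α g' g' :=
        lt_of_le_of_ne (X.linkInner_self_nonneg hα g') (Ne.symm h0)
      have hmem : X.linkInner α g' (X.linkWalk α g') / X.linkInner α g' g'
          ∈ { r : ℝ | ∃ f : V → ℝ,
            X.linkInner α f (fun _ => 1) = 0 ∧ X.linkInner α f f ≠ 0 ∧
            r = X.linkInner α f (X.linkWalk α f) / X.linkInner α f f } :=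
        ⟨g', horth, h0, rfl⟩
      have hle := le_csSup (X.linkLam2_bdd hα hc hmd) hmem
      have hle2 := le_trans hle (X.linkLam2_le_gammaC hα hc hmd)
      calc X.linkInner α g' (X.linkWalk α g')
          = (X.linkInner α g' (X.linkWalk α g') / X.linkInner α g' g')
              * X.linkInner α g' g' := by field_simp
        _ ≤ X.gammaC m * X.linkInner α g' g' :=
            mul_le_mul_of_nonneg_right hle2 hden.le
  rw [hquad, hnorm]
  nlinarith [hA]

end WSC


namespace WSC

variable {V : Type*} [DecidableEq V] [Fintype V] {d : ℕ}

lemma gammaC_lower (X : WSC V d) {m : ℕ} (hm : m < d) :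
    -(1 / ((d : ℝ) - m)) ≤ X.gammaC m := by
  classical
  obtain ⟨T, hT, _, hTcard⟩ := X.pure ∅ X.empty_mem
  obtain ⟨α, _, hαT, hαcard⟩ := Finset.exists_subsuperset_card_eq (n := m) (Finset.empty_subset T)
    (by simp) (by omega)
  have hα : α ∈ X.faces := X.down_closed T hT α hαT
  have hcard : α.card = m := by simpa using hαcard
  have hmd : m + 1 ≤ d := hm
  have htot := X.vert_total hα hcard (by omega)
  have hsub : T \ α ⊆ X.linkVerts α := by
    intro x hx
    rw [Finset.mem_sdiff] at hx
    rw [X.mem_linkVerts]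
    exact ⟨hx.2, X.down_closed T hT _ (Finset.insert_subset hx.1 hαT)⟩
  have hn : d + 1 - m ≤ (X.linkVerts α).card := by
    calc d + 1 - m = (T \ α).card := by rw [Finset.card_sdiff_of_subset hαT, hTcard, hcard]
      _ ≤ _ := Finset.card_le_card hsub
  have hnn : 2 ≤ (X.linkVerts α).card := by omega
  have hne : (X.linkVerts α).Nonempty := Finset.card_pos.1 (by omega)
  have hcardpos : (0 : ℝ) < ((X.linkVerts α).card : ℝ) := by
    exact_mod_cast (by omega : 0 < (X.linkVerts α).card)
  have hmin : ∃ x₀ ∈ X.linkVerts α, X.linkPi α {x₀} ≤ 1 / ((X.linkVerts α).card : ℝ) := by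
    by_contra hcon
    push_neg at hcon
    have hlt : (1 : ℝ) < ∑ x ∈ X.linkVerts α, X.linkPi α {x} := by
      calc (1:ℝ) = ∑ _x ∈ X.linkVerts α, 1 / ((X.linkVerts α).card : ℝ) := by
            rw [Finset.sum_const, nsmul_eq_mul]
            field_simp
        _ < ∑ x ∈ X.linkVerts α, X.linkPi α {x} :=
            Finset.sum_lt_sum_of_nonempty hne (fun x hx => hcon x hx)
    rw [htot] at hlt; linarith
  obtain ⟨x₀, hx₀, hwle⟩ := hmin
  set w := X.linkPi α {x₀} with hwdef
  have hwpos : 0 < w := X.linkPi_single_pos hα hx₀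
  have hDcast : ((d : ℝ) + 1 - m) ≤ ((X.linkVerts α).card : ℝ) := by
    have : ((d + 1 - m : ℕ) : ℝ) ≤ ((X.linkVerts α).card : ℝ) := by exact_mod_cast hn
    rw [Nat.cast_sub (by omega)] at this
    push_cast at this
    linarith
  have hD1 : (1 : ℝ) ≤ (d : ℝ) - m := by
    have : (m : ℝ) + 1 ≤ (d : ℝ) := by exact_mod_cast hmd
    linarith
  have hwD : w * ((d : ℝ) - m + 1) ≤ 1 := by
    have h1 : w ≤ 1 / ((X.linkVerts α).card : ℝ) := hwle
    have h2 : 1 / ((X.linkVerts α).card : ℝ) ≤ 1 / ((d : ℝ) - m + 1) := by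
      apply one_div_le_one_div_of_le
      · linarith
      · linarith
    have h3 : w ≤ 1 / ((d : ℝ) - m + 1) := le_trans h1 h2
    rw [le_div_iff₀ (by linarith : (0:ℝ) < (d : ℝ) - m + 1)] at h3
    linarith
  have hw1 : w < 1 := by nlinarith
  set g : V → ℝ := fun z => (if z = x₀ then 1 else 0) - w with hgdef
  have hind : ∑ x ∈ X.linkVerts α, X.linkPi α {x} * (if x = x₀ then (1:ℝ) else 0) = w := by
    have h1 : ∀ x ∈ X.linkVerts α, X.linkPi α {x} * (if x = x₀ then (1:ℝ) else 0)
        = (if x = x₀ then X.linkPi α {x} else 0) := by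
      intro x _; split_ifs <;> ring
    rw [Finset.sum_congr rfl h1, Finset.sum_ite_eq' (X.linkVerts α) x₀
      (fun x => X.linkPi α {x}), if_pos hx₀]
  have horth : X.linkInner α g (fun _ => 1) = 0 := by
    unfold linkInner
    have h1 : ∀ x ∈ X.linkVerts α, X.linkPi α {x} * g x * 1
        = X.linkPi α {x} * (if x = x₀ then (1:ℝ) else 0) - w * X.linkPi α {x} := by
      intro x _; simp only [hgdef]; ring
    rw [Finset.sum_congr rfl h1, Finset.sum_sub_distrib, hind, ← Finset.mul_sum, htot]
    ring
  have hden : X.linkInner α g g = w * (1 - w) := by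
    unfold linkInner
    have h1 : ∀ x ∈ X.linkVerts α, X.linkPi α {x} * g x * g x
        = (X.linkPi α {x} * (if x = x₀ then (1:ℝ) else 0)) * (1 - 2 * w)
          + w ^ 2 * X.linkPi α {x} := by
      intro x _
      by_cases h : x = x₀ <;> simp only [hgdef, h, if_pos, if_neg, if_true, if_false] <;> ring
    rw [Finset.sum_congr rfl h1, Finset.sum_add_distrib, ← Finset.sum_mul, hind,
      ← Finset.mul_sum, htot]
    ring
  have hdenpos : 0 < w * (1 - w) := by nlinarith
  -- the walk applied to the indicator
  have hMind : ∀ x ∈ X.linkVerts α,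
      X.linkWalk α (fun z => if z = x₀ then (1:ℝ) else 0) x
        = (if x₀ ∈ (X.linkVerts α).filter
            (fun y => y ≠ x ∧ insert y (insert x α) ∈ X.faces)
           then X.linkPi α {x, x₀} / (2 * X.linkPi α {x}) else 0) := by
    intro x _
    unfold linkWalk
    have h1 : ∀ y ∈ (X.linkVerts α).filter
        (fun y => y ≠ x ∧ insert y (insert x α) ∈ X.faces),
        X.linkPi α {x, y} / (2 * X.linkPi α {x}) * (if y = x₀ then (1:ℝ) else 0)
          = (if y = x₀ then X.linkPi α {x, y} / (2 * X.linkPi α {x}) else 0) := by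
      intro y _; split_ifs <;> ring
    rw [Finset.sum_congr rfl h1, Finset.sum_ite_eq']
  have hS : ∑ x ∈ X.linkVerts α,
      (if x₀ ∈ (X.linkVerts α).filter
          (fun y => y ≠ x ∧ insert y (insert x α) ∈ X.faces)
       then X.linkPi α {x, x₀} / 2 else 0) = w := by
    have e1 : ∀ x ∈ X.linkVerts α,
        (if x₀ ∈ (X.linkVerts α).filter
            (fun y => y ≠ x ∧ insert y (insert x α) ∈ X.faces)
         then X.linkPi α {x, x₀} / 2 else 0)
        = ∑ y ∈ (X.linkVerts α).filter
            (fun y => y ≠ x ∧ insert y (insert x α) ∈ X.faces),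
            (if y = x₀ then X.linkPi α {x, y} / 2 else 0) := by
      intro x _
      rw [Finset.sum_ite_eq']
    rw [Finset.sum_congr rfl e1,
      X.sum_pairs_swap α (fun x y => if y = x₀ then X.linkPi α {x, y} / 2 else 0)]
    have e2 : ∀ x ∈ X.linkVerts α,
        (∑ y ∈ (X.linkVerts α).filter
            (fun y => y ≠ x ∧ insert y (insert x α) ∈ X.faces),
            (if x = x₀ then X.linkPi α {y, x} / 2 else 0))
        = (if x = x₀
           then (∑ y ∈ (X.linkVerts α).filter
              (fun y => y ≠ x ∧ insert y (insert x α) ∈ X.faces),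
              X.linkPi α {x, y} / 2)
           else 0) := by
      intro x _
      split_ifs with h
      · apply Finset.sum_congr rfl; intro y _; rw [Finset.pair_comm y x]
      · apply Finset.sum_eq_zero; intro y _; rfl
    rw [Finset.sum_congr rfl e2, Finset.sum_ite_eq', if_pos hx₀,
      X.rowsum_half hα hcard hmd hx₀]
  have hnum : X.linkInner α g (X.linkWalk α g) = -(w * w) := by
    have hMg : ∀ x ∈ X.linkVerts α, X.linkWalk α g x
        = X.linkWalk α (fun z => if z = x₀ then (1:ℝ) else 0) x - w := by
      intro x hx
      have h := X.walk_shift hα hcard hmd (fun z => if z = x₀ then (1:ℝ) else 0) (-w) hx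
      have hfun : (fun z => (if z = x₀ then (1:ℝ) else 0) + (-w)) = g := by
        funext z; simp only [hgdef]; ring
      rw [hfun] at h
      rw [h]; ring
    unfold linkInner
    have h1 : ∀ x ∈ X.linkVerts α, X.linkPi α {x} * g x * X.linkWalk α g x
        = X.linkPi α {x} * g x
            * X.linkWalk α (fun z => if z = x₀ then (1:ℝ) else 0) x
          - w * (X.linkPi α {x} * g x * 1) := by
      intro x hx; rw [hMg x hx]; ring
    rw [Finset.sum_congr rfl h1, Finset.sum_sub_distrib]
    have h2 : ∑ x ∈ X.linkVerts α, X.linkPi α {x} * g x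
        * X.linkWalk α (fun z => if z = x₀ then (1:ℝ) else 0) x
        = ∑ x ∈ X.linkVerts α,
            (-w) * (if x₀ ∈ (X.linkVerts α).filter
              (fun y => y ≠ x ∧ insert y (insert x α) ∈ X.faces)
             then X.linkPi α {x, x₀} / 2 else 0) := by
      apply Finset.sum_congr rfl
      intro x hx
      rw [hMind x hx]
      have hpos := X.linkPi_single_pos hα hx
      by_cases hq : x₀ ∈ (X.linkVerts α).filter
          (fun y => y ≠ x ∧ insert y (insert x α) ∈ X.faces)
      · rw [if_pos hq, if_pos hq]
        have hxne : x ≠ x₀ := by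
          simp only [Finset.mem_filter] at hq
          exact fun h => hq.2.1 h.symm
        have hgx : g x = -w := by simp only [hgdef, if_neg hxne]; ring
        rw [hgx]
        field_simp
      · rw [if_neg hq, if_neg hq]; ring
    rw [h2, ← Finset.mul_sum, hS]
    have h3 : ∑ x ∈ X.linkVerts α, w * (X.linkPi α {x} * g x * 1)
        = w * X.linkInner α g (fun _ => 1) := by
      unfold linkInner
      rw [Finset.mul_sum]
    rw [h3, horth]
    ring
  -- the Rayleigh quotient
  have hquot : X.linkInner α g (X.linkWalk α g) / X.linkInner α g g
      = -(w / (1 - w)) := by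
    rw [hnum, hden, div_eq_iff (ne_of_gt hdenpos)]
    have h1w : (1 : ℝ) - w ≠ 0 := by linarith
    field_simp
  have hmem : X.linkInner α g (X.linkWalk α g) / X.linkInner α g g
      ∈ { r : ℝ | ∃ f : V → ℝ,
        X.linkInner α f (fun _ => 1) = 0 ∧ X.linkInner α f f ≠ 0 ∧
        r = X.linkInner α f (X.linkWalk α f) / X.linkInner α f f } :=
    ⟨g, horth, by rw [hden]; exact ne_of_gt hdenpos, rfl⟩
  have hle1 := le_csSup (X.linkLam2_bdd hα hcard hmd) hmem
  have hle2 := le_trans hle1 (X.linkLam2_le_gammaC hα hcard hmd)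
  have hfinal : -(1 / ((d : ℝ) - m)) ≤ -(w / (1 - w)) := by
    rw [neg_le_neg_iff]
    rw [div_le_div_iff₀ (by linarith : (0:ℝ) < 1 - w) (by linarith : (0:ℝ) < (d:ℝ) - m)]
    nlinarith
  rw [hquot] at hle2
  linarith

end WSC


namespace WSC

variable {V : Type*} [DecidableEq V] [Fintype V] {d : ℕ}

lemma inn_up_down (X : WSC V d) {s : ℕ} (hs : s ≤ d) (f g : Finset V → ℝ) :
    X.inn (s + 1) (upOp f) g = X.inn s f (X.downOp g) := by
  unfold inn upOp downOp
  have lhs : ∑ β ∈ X.faces.filter (fun b => b.card = s + 1),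
      X.W (s+1) β * ((1 / (β.card : ℝ)) * ∑ x ∈ β, f (β.erase x)) * g β
      = ∑ β ∈ X.faces.filter (fun b => b.card = s + 1),
          ∑ a ∈ X.faces.filter (fun a => a ⊆ β ∧ a.card = s),
            (1 / ((s : ℝ) + 1)) * (X.W (s+1) β * f a * g β) := by
    apply Finset.sum_congr rfl
    intro β hβ
    simp only [Finset.mem_filter] at hβ
    rw [← X.sum_erase_eq hβ.1 hβ.2
      (fun a => (1 / ((s : ℝ) + 1)) * (X.W (s+1) β * f a * g β)), hβ.2]
    push_cast
    simp only [Finset.mul_sum, Finset.sum_mul]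
    apply Finset.sum_congr rfl
    intro x _
    ring
  rw [lhs, X.sum_pair_swap s (fun a β => (1 / ((s : ℝ) + 1)) * (X.W (s+1) β * f a * g β))]
  apply Finset.sum_congr rfl
  intro a ha
  simp only [Finset.mem_filter] at ha
  rw [ha.2, Finset.mul_sum]
  apply Finset.sum_congr rfl
  intro β hβ
  simp only [Finset.mem_filter] at hβ
  have hW := X.W_pos' ha.1 ha.2
  field_simp

lemma downOp_vertAvg (X : WSC V d) {α : Finset V} (hα : α ∈ X.faces) {m : ℕ}
    (hc : α.card = m) (f : Finset V → ℝ) :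
    X.downOp f α = ∑ x ∈ X.linkVerts α, X.linkPi α {x} * f (insert x α) := by
  unfold downOp
  have h1 : ∀ x ∈ X.linkVerts α, X.linkPi α {x} * f (insert x α)
      = (fun β => X.W (m+1) β * f β / (((m:ℝ)+1) * X.W m α)) (insert x α) := by
    intro x hx
    rw [X.linkPi_single (X.mem_linkVerts.1 hx).1 hc]
    ring
  rw [Finset.sum_congr rfl h1, X.sum_linkVerts_eq α
    (fun β => X.W (m+1) β * f β / (((m:ℝ)+1) * X.W m α)), hc]

lemma decomp_norm (X : WSC V d) {m : ℕ} (f : Finset V → ℝ) :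
    ∑ α ∈ X.faces.filter (fun a => a.card = m),
      X.W m α * X.linkInner α (fun x => f (insert x α)) (fun x => f (insert x α))
      = X.inn (m + 1) f f := by
  unfold linkInner inn
  have h1 : ∀ α ∈ X.faces.filter (fun a => a.card = m),
      X.W m α * ∑ x ∈ X.linkVerts α,
        X.linkPi α {x} * f (insert x α) * f (insert x α)
      = (1 / ((m:ℝ)+1)) * ∑ β ∈ X.faces.filter (fun b => α ⊆ b ∧ b.card = m + 1),
          X.W (m+1) β * f β * f β := by
    intro α hα
    simp only [Finset.mem_filter] at hα
    have hW := X.W_pos' hα.1 hα.2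
    have h2 : ∀ x ∈ X.linkVerts α,
        X.W m α * (X.linkPi α {x} * f (insert x α) * f (insert x α))
        = (fun β => (1/((m:ℝ)+1)) * (X.W (m+1) β * f β * f β)) (insert x α) := by
      intro x hx
      rw [X.linkPi_single (X.mem_linkVerts.1 hx).1 hα.2]
      field_simp
    rw [Finset.mul_sum, Finset.sum_congr rfl h2, X.sum_linkVerts_eq α
      (fun β => (1/((m:ℝ)+1)) * (X.W (m+1) β * f β * f β)), hα.2, ← Finset.mul_sum]
  rw [Finset.sum_congr rfl h1]
  have h3 := X.sum_pair_swap m (fun a β => X.W (m+1) β * f β * f β)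
  calc ∑ α ∈ X.faces.filter (fun a => a.card = m),
        (1 / ((m:ℝ)+1)) * ∑ β ∈ X.faces.filter (fun b => α ⊆ b ∧ b.card = m + 1),
          X.W (m+1) β * f β * f β
      = (1 / ((m:ℝ)+1)) * ∑ α ∈ X.faces.filter (fun a => a.card = m),
          ∑ β ∈ X.faces.filter (fun b => α ⊆ b ∧ b.card = m + 1),
            X.W (m+1) β * f β * f β := by rw [Finset.mul_sum]
    _ = (1 / ((m:ℝ)+1)) * ∑ β ∈ X.faces.filter (fun b => b.card = m + 1),
          ∑ a ∈ X.faces.filter (fun a => a ⊆ β ∧ a.card = m),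
            X.W (m+1) β * f β * f β := by rw [h3]
    _ = ∑ β ∈ X.faces.filter (fun b => b.card = m + 1), X.W (m+1) β * f β * f β := by
        rw [Finset.mul_sum]
        apply Finset.sum_congr rfl
        intro β hβ
        simp only [Finset.mem_filter] at hβ
        rw [Finset.sum_const, X.filter_sub_eq_image hβ.1 hβ.2,
          Finset.card_image_of_injOn, hβ.2, nsmul_eq_mul]
        · push_cast
          field_simp
        · intro x hx y hy hxy
          have hxy' : β.erase x = β.erase y := hxy
          by_contra hne
          have h' : x ∈ β.erase y := Finset.mem_erase.2 ⟨hne, by simpa using hx⟩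
          rw [← hxy'] at h'
          exact (Finset.mem_erase.1 h').1 rfl

lemma link_energy (X : WSC V d) (m : ℕ) (f : Finset V → ℝ) :
    ∑ α ∈ X.faces.filter (fun a => a.card = m),
      X.W m α * X.linkInner α (fun x => f (insert x α))
        (X.linkWalk α (fun x => f (insert x α)))
    = ∑ β ∈ X.faces.filter (fun b => b.card = m + 2),
        ∑ x ∈ β, ∑ y ∈ β.erase x,
          X.W (m+2) β * f (β.erase x) * f (β.erase y)
            / (((m:ℝ)+2) * ((m:ℝ)+1)) := by
  have h1 : ∀ α ∈ X.faces.filter (fun a => a.card = m),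
      X.W m α * X.linkInner α (fun x => f (insert x α))
        (X.linkWalk α (fun x => f (insert x α)))
      = ∑ x ∈ X.linkVerts α, ∑ y ∈ (X.linkVerts α).filter
            (fun y => y ≠ x ∧ insert y (insert x α) ∈ X.faces),
          X.W (m+2) (insert y (insert x α)) * f (insert x α) * f (insert y α)
            / (((m:ℝ)+2) * ((m:ℝ)+1)) := by
    intro α hα
    simp only [Finset.mem_filter] at hα
    rw [X.linkQuad hα.1, Finset.mul_sum]
    apply Finset.sum_congr rfl; intro x hx
    rw [Finset.mul_sum]
    apply Finset.sum_congr rfl; intro y hy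
    rw [X.mem_linkVerts] at hx
    simp only [Finset.mem_filter, X.mem_linkVerts] at hy
    have hp := X.linkPi_pair hα.1 hx.1 hy.1.1 hy.2.1 hα.2
    have hW := X.W_pos' hα.1 hα.2
    have hm2 : (0:ℝ) < ((m:ℝ)+2) * ((m:ℝ)+1) := by positivity
    calc X.W m α * (X.linkPi α {x, y} / 2 * f (insert x α) * f (insert y α))
        = X.W m α * (X.linkPi α {x, y} / 2) * f (insert x α) * f (insert y α) := by ring
      _ = _ := by
          rw [hp]
          field_simp
  rw [Finset.sum_congr rfl h1]
  rw [Finset.sum_sigma', Finset.sum_sigma', Finset.sum_sigma', Finset.sum_sigma']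
  apply Finset.sum_nbij'
    (i := fun q => (⟨⟨insert q.2 (insert q.1.2 q.1.1), q.1.2⟩, q.2⟩ :
      (_ : (_ : Finset V) × V) × V))
    (j := fun q => (⟨⟨(q.1.1.erase q.1.2).erase q.2, q.1.2⟩, q.2⟩ :
      (_ : (_ : Finset V) × V) × V))
  · rintro ⟨⟨α, x⟩, y⟩ hq
    simp only [Finset.mem_sigma, Finset.mem_filter, Finset.mem_erase,
      X.mem_linkVerts] at hq ⊢
    obtain ⟨⟨⟨hαf, hαc⟩, hxα, hxf⟩, ⟨hyα, hyf⟩, hyx, hf⟩ := hq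
    have hyix : y ∉ insert x α := by simp [Finset.mem_insert, hyα, hyx]
    refine ⟨⟨⟨hf, ?_⟩, ?_⟩, ?_, ?_⟩
    · rw [Finset.card_insert_of_notMem hyix, Finset.card_insert_of_notMem hxα, hαc]
    · exact Finset.mem_insert_of_mem (Finset.mem_insert_self x α)
    · exact hyx
    · exact Finset.mem_insert_self y _
  · rintro ⟨⟨β, x⟩, y⟩ hq
    simp only [Finset.mem_sigma, Finset.mem_filter, Finset.mem_erase] at hq
    obtain ⟨⟨⟨hβf, hβc⟩, hxβ⟩, hyx, hyβ⟩ := hq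
    simp only [Finset.mem_sigma, Finset.mem_filter, X.mem_linkVerts]
    have hxe : x ∉ (β.erase x).erase y := fun h =>
      (Finset.mem_erase.1 (Finset.mem_erase.1 h).2).1 rfl
    have hye : y ∉ (β.erase x).erase y := fun h => (Finset.mem_erase.1 h).1 rfl
    have hins1 : insert x ((β.erase x).erase y) = β.erase y := by
      rw [Finset.erase_right_comm]
      exact Finset.insert_erase (Finset.mem_erase.2 ⟨fun h => hyx h.symm, hxβ⟩)
    have hins2 : insert y ((β.erase x).erase y) = β.erase x := by
      exact Finset.insert_erase (Finset.mem_erase.2 ⟨hyx, hyβ⟩)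
    have hins3 : insert y (insert x ((β.erase x).erase y)) = β := by
      rw [hins1]
      exact Finset.insert_erase hyβ
    refine ⟨⟨⟨?_, ?_⟩, hxe, ?_⟩, ⟨hye, ?_⟩, hyx, ?_⟩
    · exact X.down_closed β hβf _ (subset_trans (Finset.erase_subset _ _)
        (Finset.erase_subset _ _))
    · rw [Finset.card_erase_of_mem (Finset.mem_erase.2 ⟨hyx, hyβ⟩),
        Finset.card_erase_of_mem hxβ, hβc]
      omega
    · rw [hins1]; exact X.down_closed β hβf _ (Finset.erase_subset _ _)
    · rw [hins2]; exact X.down_closed β hβf _ (Finset.erase_subset _ _)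
    · rw [hins3]; exact hβf
  · rintro ⟨⟨α, x⟩, y⟩ hq
    simp only [Finset.mem_sigma, Finset.mem_filter, X.mem_linkVerts] at hq
    obtain ⟨⟨⟨hαf, hαc⟩, hxα, hxf⟩, ⟨hyα, hyf⟩, hyx, hf⟩ := hq
    have hyix : y ∉ insert x α := by simp [Finset.mem_insert, hyα, hyx]
    have e1 : (insert y (insert x α)).erase y = insert x α := Finset.erase_insert hyix
    have e2 : ((insert y (insert x α)).erase x).erase y
        = ((insert y (insert x α)).erase y).erase x := Finset.erase_right_comm
    simp only [e2, e1, Finset.erase_insert hxα]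
  · rintro ⟨⟨β, x⟩, y⟩ hq
    simp only [Finset.mem_sigma, Finset.mem_filter, Finset.mem_erase] at hq
    obtain ⟨⟨⟨hβf, hβc⟩, hxβ⟩, hyx, hyβ⟩ := hq
    have hins1 : insert x ((β.erase x).erase y) = β.erase y := by
      rw [Finset.erase_right_comm]
      exact Finset.insert_erase (Finset.mem_erase.2 ⟨fun h => hyx h.symm, hxβ⟩)
    have hins3 : insert y (insert x ((β.erase x).erase y)) = β := by
      rw [hins1]; exact Finset.insert_erase hyβ
    simp only [hins3]
  · rintro ⟨⟨α, x⟩, y⟩ hq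
    simp only [Finset.mem_sigma, Finset.mem_filter, X.mem_linkVerts] at hq
    obtain ⟨⟨⟨hαf, hαc⟩, hxα, hxf⟩, ⟨hyα, hyf⟩, hyx, hf⟩ := hq
    have hyix : y ∉ insert x α := by simp [Finset.mem_insert, hyα, hyx]
    have e1 : (insert y (insert x α)).erase y = insert x α := Finset.erase_insert hyix
    have hxiy : x ∉ insert y α := by
      simp only [Finset.mem_insert]
      push_neg
      exact ⟨fun h => hyx h.symm, hxα⟩
    have e2 : (insert y (insert x α)).erase x = insert y α := by
      rw [Finset.insert_comm]
      exact Finset.erase_insert hxiy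
    rw [e1, e2]
    ring

lemma sum_W_eq2 (X : WSC V d) {m : ℕ} (hmd : m + 1 ≤ d) (a : Finset V) :
    ∑ β ∈ X.faces.filter (fun β => a ⊆ β ∧ β.card = m + 2), X.W (m + 2) β
      = ((m : ℝ) + 2) * X.W (m + 1) a := by
  have h := X.sum_W_eq (show m + 1 ≤ d from hmd) a
  have hc : (((m + 1 : ℕ) : ℝ) + 1) = (m : ℝ) + 2 := by push_cast; ring
  rw [hc] at h
  exact h

lemma garland (X : WSC V d) (m : ℕ) (hmd : m + 1 ≤ d) (f : Finset V → ℝ) :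
    X.inn (m + 2) (upOp f) (upOp f)
      = (1 / ((m:ℝ) + 2)) * X.inn (m + 1) f f
        + (((m:ℝ) + 1) / ((m:ℝ) + 2)) * ∑ α ∈ X.faces.filter (fun a => a.card = m),
            X.W m α * X.linkInner α (fun x => f (insert x α))
              (X.linkWalk α (fun x => f (insert x α))) := by
  rw [X.link_energy m f]
  have hdiag : ∑ β ∈ X.faces.filter (fun b => b.card = m + 2),
      X.W (m+2) β * ∑ x ∈ β, f (β.erase x) * f (β.erase x)
      = ((m:ℝ)+2) * X.inn (m+1) f f := by
    have h1 : ∀ β ∈ X.faces.filter (fun b => b.card = m + 2),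
        X.W (m+2) β * ∑ x ∈ β, f (β.erase x) * f (β.erase x)
        = ∑ a ∈ X.faces.filter (fun a => a ⊆ β ∧ a.card = m + 1),
            X.W (m+2) β * (f a * f a) := by
      intro β hβ
      simp only [Finset.mem_filter] at hβ
      rw [← X.sum_erase_eq hβ.1 hβ.2 (fun a => X.W (m+2) β * (f a * f a)), Finset.mul_sum]
    rw [Finset.sum_congr rfl h1,
      X.sum_pair_swap (m+1) (fun a β => X.W (m+2) β * (f a * f a))]
    unfold inn
    rw [Finset.mul_sum]
    apply Finset.sum_congr rfl
    intro a ha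
    rw [← Finset.sum_mul, X.sum_W_eq2 hmd a]
    ring
  unfold inn upOp
  have hsplit : ∀ β ∈ X.faces.filter (fun b => b.card = m + 2),
      X.W (m+2) β * ((1 / (β.card : ℝ)) * ∑ x ∈ β, f (β.erase x))
          * ((1 / (β.card : ℝ)) * ∑ x ∈ β, f (β.erase x))
      = (1 / (((m:ℝ)+2) * ((m:ℝ)+2)))
          * (X.W (m+2) β * ∑ x ∈ β, f (β.erase x) * f (β.erase x))
        + (((m:ℝ)+1) / ((m:ℝ)+2)) * ∑ x ∈ β, ∑ y ∈ β.erase x,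
            X.W (m+2) β * f (β.erase x) * f (β.erase y)
              / (((m:ℝ)+2) * ((m:ℝ)+1)) := by
    intro β hβ
    simp only [Finset.mem_filter] at hβ
    rw [hβ.2]
    have hsq : (∑ x ∈ β, f (β.erase x)) * (∑ x ∈ β, f (β.erase x))
        = (∑ x ∈ β, f (β.erase x) * f (β.erase x))
          + ∑ x ∈ β, ∑ y ∈ β.erase x, f (β.erase x) * f (β.erase y) := by
      rw [Finset.sum_mul_sum, ← Finset.sum_add_distrib]
      apply Finset.sum_congr rfl
      intro x hx
      rw [← Finset.add_sum_erase β (fun y => f (β.erase x) * f (β.erase y)) hx]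
    have hO : ∑ x ∈ β, ∑ y ∈ β.erase x,
        X.W (m+2) β * f (β.erase x) * f (β.erase y) / (((m:ℝ)+2) * ((m:ℝ)+1))
        = (X.W (m+2) β / (((m:ℝ)+2) * ((m:ℝ)+1)))
            * ∑ x ∈ β, ∑ y ∈ β.erase x, f (β.erase x) * f (β.erase y) := by
      rw [Finset.mul_sum]
      apply Finset.sum_congr rfl; intro x _
      rw [Finset.mul_sum]
      apply Finset.sum_congr rfl; intro y _
      ring
    rw [hO]
    push_cast
    have scalar : ∀ (Wv A D O : ℝ), A * A = D + O →
        Wv * (1/((m:ℝ)+2) * A) * (1/((m:ℝ)+2) * A)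
        = 1/(((m:ℝ)+2) * ((m:ℝ)+2)) * (Wv * D)
          + ((m:ℝ)+1)/((m:ℝ)+2) * (Wv / (((m:ℝ)+2) * ((m:ℝ)+1)) * O) := by
      intro Wv A D O h
      have hAA : Wv * (1/((m:ℝ)+2) * A) * (1/((m:ℝ)+2) * A)
          = (Wv * (A * A)) * (1/((m:ℝ)+2) * (1/((m:ℝ)+2))) := by ring
      rw [hAA, h]
      have h2 : ((m:ℝ) + 2) ≠ 0 := by positivity
      have h1 : ((m:ℝ) + 1) ≠ 0 := by positivity
      field_simp
    exact scalar _ _ _ _ hsq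
  rw [Finset.sum_congr rfl hsplit, Finset.sum_add_distrib, ← Finset.mul_sum,
    ← Finset.mul_sum, hdiag]
  have hinn : X.inn (m+1) f f
      = ∑ α ∈ X.faces.filter (fun α => α.card = m + 1), X.W (m + 1) α * f α * f α := rfl
  rw [← hinn]
  field_simp
end WSC


namespace WSC

variable {V : Type*} [DecidableEq V] [Fintype V] {d : ℕ}

lemma prod_gamma_le (X : WSC V d) : ∀ b, b ≤ d → ∀ a, a ≤ b →
    ∏ j ∈ Finset.Ico a b, (1 - X.gammaC j) ≤ ((d:ℝ) - a + 1) / ((d:ℝ) - b + 1) := by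
  intro b
  induction b with
  | zero =>
    intro _ a ha
    have : a = 0 := by omega
    subst this
    simp only [Finset.Ico_self, Finset.prod_empty, Nat.cast_zero, sub_zero]
    rw [div_self (by positivity : (d:ℝ) + 1 ≠ 0)]
  | succ b ih =>
    intro hb a ha
    have hdb : (0:ℝ) < (d : ℝ) - b := by
      have : (b:ℝ) + 1 ≤ (d:ℝ) := by exact_mod_cast hb
      linarith
    rcases Nat.lt_or_ge a (b+1) with h | h
    · have hab : a ≤ b := by omega
      rw [Finset.prod_Ico_succ_top hab]
      have h1 := ih (by omega) a hab
      have hγb : X.gammaC b ≤ 1 := X.gammaC_le_one (by omega)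
      have hγb' : -(1 / ((d : ℝ) - b)) ≤ X.gammaC b := X.gammaC_lower (by omega)
      have hprodnn : 0 ≤ ∏ j ∈ Finset.Ico a b, (1 - X.gammaC j) := by
        apply Finset.prod_nonneg
        intro j hj
        simp only [Finset.mem_Ico] at hj
        have : X.gammaC j ≤ 1 := X.gammaC_le_one (by omega)
        linarith
      have had : (a:ℝ) ≤ (d:ℝ) := by exact_mod_cast (by omega : a ≤ d)
      have hfac : (1 - X.gammaC b) ≤ ((d:ℝ) - b + 1) / ((d:ℝ) - b) := by
        rw [le_div_iff₀ hdb]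
        have h2 : -(1/((d:ℝ)-b)) * ((d:ℝ)-b) = -1 := by field_simp
        nlinarith
      have hfacnn : 0 ≤ 1 - X.gammaC b := by linarith
      have hrhsnn : 0 ≤ ((d:ℝ) - a + 1) / ((d:ℝ) - b + 1) := by
        apply div_nonneg <;> linarith
      calc (∏ j ∈ Finset.Ico a b, (1 - X.gammaC j)) * (1 - X.gammaC b)
          ≤ (((d:ℝ) - a + 1) / ((d:ℝ) - b + 1)) * (((d:ℝ) - b + 1) / ((d:ℝ) - b)) :=
            mul_le_mul h1 hfac hfacnn hrhsnn
        _ = ((d:ℝ) - ((b+1:ℕ):ℝ) + 1) / ((d:ℝ) - ((b+1:ℕ):ℝ) + 1)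
              * (((d:ℝ) - a + 1) / ((d:ℝ) - ((b+1:ℕ):ℝ) + 1)) := by
            have hc : ((b+1:ℕ):ℝ) = (b:ℝ) + 1 := by push_cast; ring
            rw [hc]
            have heq : (d:ℝ) - ((b:ℝ)+1) + 1 = (d:ℝ) - b := by ring
            rw [heq, div_mul_div_comm, mul_comm ((d:ℝ) - a + 1) ((d:ℝ) - b + 1),
              mul_div_mul_left _ _ (by linarith : ((d:ℝ) - b + 1) ≠ 0),
              div_self (by linarith : ((d:ℝ) - b) ≠ 0), one_mul]
        _ = ((d:ℝ) - ((b+1:ℕ):ℝ) + 1) / ((d:ℝ) - ((b+1:ℕ):ℝ) + 1)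
              * (((d:ℝ) - a + 1) / ((d:ℝ) - ((b+1:ℕ):ℝ) + 1)) * 1 := by ring
        _ ≤ ((d:ℝ) - a + 1) / ((d:ℝ) - ((b+1:ℕ):ℝ) + 1) := by
            have hc : ((b+1:ℕ):ℝ) = (b:ℝ) + 1 := by push_cast; ring
            rw [hc]
            have heq : (d:ℝ) - ((b:ℝ)+1) + 1 = (d:ℝ) - b := by ring
            rw [heq, div_self (by linarith : ((d:ℝ) - b) ≠ 0), one_mul, mul_one]
    · have : a = b + 1 := by omega
      subst this
      simp only [Finset.Ico_self, Finset.prod_empty]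
      rw [div_self]
      have : (d:ℝ) - (b+1:ℕ) + 1 = (d:ℝ) - b := by push_cast; ring
      rw [this]
      linarith

lemma theta_nonneg (X : WSC V d) {q s : ℕ} (hq : q ≤ s) (hs : s ≤ d) :
    0 ≤ 1 - (1 / ((s : ℕ) + 1 : ℝ)) * ∏ j ∈ Finset.Ico q s, (1 - X.gammaC j) := by
  have h1 := X.prod_gamma_le s hs q hq
  have hq' : (q:ℝ) ≤ (s:ℝ) := by exact_mod_cast hq
  have hs' : (s:ℝ) ≤ (d:ℝ) := by exact_mod_cast hs
  have hq0 : (0:ℝ) ≤ (q:ℝ) := by positivity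
  have hd1 : (0:ℝ) < (d:ℝ) - s + 1 := by linarith
  have h2 : ((d:ℝ) - q + 1) / ((d:ℝ) - s + 1) ≤ (s:ℝ) + 1 := by
    rw [div_le_iff₀ hd1]
    nlinarith [mul_nonneg (by positivity : (0:ℝ) ≤ (s:ℝ)) (by linarith : (0:ℝ) ≤ (d:ℝ) - s)]
  have h3 : ∏ j ∈ Finset.Ico q s, (1 - X.gammaC j) ≤ (s:ℝ) + 1 := le_trans h1 h2
  have hs1 : (0:ℝ) < (s:ℝ) + 1 := by positivity
  have h4 : (1 / ((s:ℝ) + 1)) * ∏ j ∈ Finset.Ico q s, (1 - X.gammaC j)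
      ≤ (1 / ((s:ℝ) + 1)) * ((s:ℝ) + 1) :=
    mul_le_mul_of_nonneg_left h3 (by positivity)
  have h5 : (1 / ((s:ℝ) + 1)) * ((s:ℝ) + 1) = 1 := by field_simp
  linarith

lemma main_claim (X : WSC V d) : ∀ t q : ℕ, q + t ≤ d → ∀ f : Finset V → ℝ,
    (∀ α ∈ X.faces, α.card = q → (X.downOp)^[t] f α = 0) →
    X.inn (q + t + 1) (upOp f) (upOp f)
      ≤ (1 - (1 / ((q + t : ℕ) + 1 : ℝ)) * ∏ j ∈ Finset.Ico q (q + t), (1 - X.gammaC j))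
          * X.inn (q + t) f f := by
  intro t
  induction t with
  | zero =>
    intro q hd f hf
    simp only [Function.iterate_zero_apply] at hf
    have h1 : X.inn (q + 0 + 1) (upOp f) (upOp f) = 0 := by
      unfold inn upOp
      apply Finset.sum_eq_zero
      intro β hβ
      simp only [Finset.mem_filter] at hβ
      have hz : ∑ x ∈ β, f (β.erase x) = 0 := by
        apply Finset.sum_eq_zero
        intro x hx
        have hcc := Finset.card_erase_of_mem hx
        apply hf _ (X.down_closed β hβ.1 _ (Finset.erase_subset _ _))
        omega
      rw [hz]; ring
    have h2 : X.inn (q + 0) f f = 0 := by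
      unfold inn
      apply Finset.sum_eq_zero
      intro a ha
      simp only [Finset.mem_filter] at ha
      rw [hf a ha.1 (by omega)]; ring
    rw [h1, h2, mul_zero]
  | succ t ih =>
    intro q hd f hf
    show X.inn (q + t + 1 + 1) (upOp f) (upOp f)
      ≤ (1 - (1 / ((q + t + 1 : ℕ) + 1 : ℝ))
            * ∏ j ∈ Finset.Ico q (q + t + 1), (1 - X.gammaC j))
          * X.inn (q + t + 1) f f
    have hsd : q + t + 1 ≤ d := by omega
    have hqd : q + t ≤ d := by omega
    have hqt : q ≤ q + t := by omega
    have hγ1 : X.gammaC (q + t) ≤ 1 := X.gammaC_le_one (by omega)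
    have hfh : ∀ α ∈ X.faces, α.card = q → (X.downOp)^[t] (X.downOp f) α = 0 := by
      intro α hα hc
      have h := hf α hα hc
      rwa [Function.iterate_succ_apply] at h
    have IH := ih q hqd (X.downOp f) hfh
    have hadj : X.inn (q + t + 1) (upOp (X.downOp f)) f
        = X.inn (q + t) (X.downOp f) (X.downOp f) := X.inn_up_down hqd (X.downOp f) f
    have hCS := X.inn_CS (q + t + 1) (upOp (X.downOp f)) f
    have hθ' := X.theta_nonneg hqt hqd
    -- H ≤ Θ' * N
    have hH : X.inn (q + t) (X.downOp f) (X.downOp f)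
        ≤ (1 - (1 / ((q + t : ℕ) + 1 : ℝ))
              * ∏ j ∈ Finset.Ico q (q + t), (1 - X.gammaC j))
            * X.inn (q + t + 1) f f := by
      rcases eq_or_lt_of_le (X.inn_nonneg (q + t) (X.downOp f)) with h0 | h0
      · rw [← h0]
        exact mul_nonneg hθ' (X.inn_nonneg _ f)
      · have h1 : (X.inn (q + t) (X.downOp f) (X.downOp f))^2
            ≤ ((1 - (1 / ((q + t : ℕ) + 1 : ℝ))
                  * ∏ j ∈ Finset.Ico q (q + t), (1 - X.gammaC j))
                * X.inn (q + t) (X.downOp f) (X.downOp f)) * X.inn (q + t + 1) f f := by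
          calc (X.inn (q + t) (X.downOp f) (X.downOp f))^2
              = (X.inn (q + t + 1) (upOp (X.downOp f)) f)^2 := by rw [hadj]
            _ ≤ X.inn (q+t+1) (upOp (X.downOp f)) (upOp (X.downOp f))
                  * X.inn (q+t+1) f f := hCS
            _ ≤ _ := mul_le_mul_of_nonneg_right IH (X.inn_nonneg _ f)
        nlinarith [h1, h0]
    -- Garland
    have hgar : X.inn (q + t + 1 + 1) (upOp f) (upOp f)
        = (1 / (((q + t : ℕ) : ℝ) + 2)) * X.inn (q + t + 1) f f
          + ((((q + t : ℕ) : ℝ) + 1) / (((q + t : ℕ) : ℝ) + 2))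
            * ∑ α ∈ X.faces.filter (fun a => a.card = q + t),
                X.W (q + t) α * X.linkInner α (fun x => f (insert x α))
                  (X.linkWalk α (fun x => f (insert x α))) :=
      X.garland (q + t) hsd f
    -- link bound summed
    have hLE : ∑ α ∈ X.faces.filter (fun a => a.card = q + t),
        X.W (q + t) α * X.linkInner α (fun x => f (insert x α))
          (X.linkWalk α (fun x => f (insert x α)))
        ≤ X.gammaC (q + t) * X.inn (q + t + 1) f f
          + (1 - X.gammaC (q + t)) * X.inn (q + t) (X.downOp f) (X.downOp f) := by
      have step1 : ∀ α ∈ X.faces.filter (fun a => a.card = q + t),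
          X.W (q + t) α * X.linkInner α (fun x => f (insert x α))
            (X.linkWalk α (fun x => f (insert x α)))
          ≤ X.W (q + t) α * (X.gammaC (q + t)
              * X.linkInner α (fun x => f (insert x α)) (fun x => f (insert x α))
            + (1 - X.gammaC (q + t))
              * (∑ x ∈ X.linkVerts α, X.linkPi α {x} * f (insert x α)) ^ 2) := by
        intro α hα
        simp only [Finset.mem_filter] at hα
        exact mul_le_mul_of_nonneg_left
          (X.link_bound hα.1 hα.2 hsd (fun x => f (insert x α)))
          (X.W_pos' hα.1 hα.2).le
      calc ∑ α ∈ X.faces.filter (fun a => a.card = q + t),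
          X.W (q + t) α * X.linkInner α (fun x => f (insert x α))
            (X.linkWalk α (fun x => f (insert x α)))
          ≤ ∑ α ∈ X.faces.filter (fun a => a.card = q + t),
              X.W (q + t) α * (X.gammaC (q + t)
                * X.linkInner α (fun x => f (insert x α)) (fun x => f (insert x α))
              + (1 - X.gammaC (q + t))
                * (∑ x ∈ X.linkVerts α, X.linkPi α {x} * f (insert x α)) ^ 2) :=
            Finset.sum_le_sum step1
        _ = X.gammaC (q + t) * ∑ α ∈ X.faces.filter (fun a => a.card = q + t),
              X.W (q + t) α * X.linkInner α (fun x => f (insert x α))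
                (fun x => f (insert x α))
            + (1 - X.gammaC (q + t)) * ∑ α ∈ X.faces.filter (fun a => a.card = q + t),
                X.W (q + t) α
                  * (∑ x ∈ X.linkVerts α, X.linkPi α {x} * f (insert x α)) ^ 2 := by
            rw [Finset.mul_sum, Finset.mul_sum, ← Finset.sum_add_distrib]
            apply Finset.sum_congr rfl
            intro α _
            ring
        _ = X.gammaC (q + t) * X.inn (q + t + 1) f f
            + (1 - X.gammaC (q + t)) * X.inn (q + t) (X.downOp f) (X.downOp f) := by
            rw [X.decomp_norm f]
            congr 1
            congr 1
            have hsq : ∀ α ∈ X.faces.filter (fun a => a.card = q + t),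
                X.W (q + t) α
                  * (∑ x ∈ X.linkVerts α, X.linkPi α {x} * f (insert x α)) ^ 2
                = X.W (q + t) α * (X.downOp f α * X.downOp f α) := by
              intro α hα
              simp only [Finset.mem_filter] at hα
              rw [X.downOp_vertAvg hα.1 hα.2 f]
              ring
            rw [Finset.sum_congr rfl hsq]
            unfold inn
            apply Finset.sum_congr rfl
            intro α _
            ring
    -- assemble
    rw [Finset.prod_Ico_succ_top hqt, hgar]
    have hcast : ((q + t + 1 : ℕ) : ℝ) = ((q + t : ℕ) : ℝ) + 1 := by push_cast; ring
    rw [hcast]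
    have c1 : (0:ℝ) ≤ (((q + t : ℕ) : ℝ) + 1) / (((q + t : ℕ) : ℝ) + 2) := by positivity
    have c2 : (0:ℝ) ≤ 1 - X.gammaC (q + t) := by linarith
    set M : ℝ := ((q + t : ℕ) : ℝ) with hM
    set N : ℝ := X.inn (q + t + 1) f f with hN
    set H : ℝ := X.inn (q + t) (X.downOp f) (X.downOp f) with hH2
    set P : ℝ := ∏ j ∈ Finset.Ico q (q + t), (1 - X.gammaC j) with hP
    set γ : ℝ := X.gammaC (q + t) with hγ
    set LE : ℝ := ∑ α ∈ X.faces.filter (fun a => a.card = q + t),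
        X.W (q + t) α * X.linkInner α (fun x => f (insert x α))
          (X.linkWalk α (fun x => f (insert x α))) with hLEdef
    have hM0 : (0:ℝ) ≤ M := by rw [hM]; positivity
    have hN0 : (0:ℝ) ≤ N := X.inn_nonneg _ f
    -- chain
    have step2 : (1 / (M + 2)) * N + ((M + 1) / (M + 2)) * LE
        ≤ (1 / (M + 2)) * N + ((M + 1) / (M + 2)) * (γ * N + (1 - γ) * H) := by
      have := mul_le_mul_of_nonneg_left hLE c1
      linarith
    have step3 : (1 / (M + 2)) * N + ((M + 1) / (M + 2)) * (γ * N + (1 - γ) * H)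
        ≤ (1 / (M + 2)) * N + ((M + 1) / (M + 2))
            * (γ * N + (1 - γ) * ((1 - (1 / (M + 1)) * P) * N)) := by
      have h4 := mul_le_mul_of_nonneg_left hH c2
      have h5 := mul_le_mul_of_nonneg_left h4 c1
      linarith
    have step4 : (1 / (M + 2)) * N + ((M + 1) / (M + 2))
          * (γ * N + (1 - γ) * ((1 - (1 / (M + 1)) * P) * N))
        = (1 - 1 / (M + 1 + 1) * (P * (1 - γ))) * N := by
      have hM1 : M + 1 ≠ 0 := by positivity
      have hM2 : M + 2 ≠ 0 := by positivity
      have hM3 : M + 1 + 1 ≠ 0 := by positivity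
      field_simp
      ring
    linarith

lemma upOp_sum {ι : Type*} (u : Finset ι) (c : ι → ℝ) (f : ι → Finset V → ℝ) :
    upOp (fun β => ∑ i ∈ u, c i * f i β) = fun β => ∑ i ∈ u, c i * upOp (f i) β := by
  funext β
  unfold upOp
  simp only [Finset.mul_sum]
  rw [Finset.sum_comm]
  apply Finset.sum_congr rfl; intro i _
  apply Finset.sum_congr rfl; intro x _
  ring

lemma downOp_sum {ι : Type*} (X : WSC V d) (u : Finset ι) (c : ι → ℝ)
    (f : ι → Finset V → ℝ) :
    X.downOp (fun β => ∑ i ∈ u, c i * f i β) = fun a => ∑ i ∈ u, c i * X.downOp (f i) a := by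
  funext a
  unfold downOp
  simp only [Finset.mul_sum, Finset.sum_div]
  rw [Finset.sum_comm]
  apply Finset.sum_congr rfl; intro i _
  apply Finset.sum_congr rfl; intro β _
  ring

lemma downOp_iter_sum {ι : Type*} (X : WSC V d) (t : ℕ) (u : Finset ι) (c : ι → ℝ)
    (f : ι → Finset V → ℝ) :
    (X.downOp)^[t] (fun β => ∑ i ∈ u, c i * f i β)
      = fun a => ∑ i ∈ u, c i * (X.downOp)^[t] (f i) a := by
  induction t generalizing f with
  | zero => rfl
  | succ t ih =>
    rw [Function.iterate_succ_apply, X.downOp_sum u c f, ih (fun i => X.downOp (f i))]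
    funext a
    apply Finset.sum_congr rfl
    intro i _
    rw [Function.iterate_succ_apply]

lemma upDown_sum {ι : Type*} (X : WSC V d) (u : Finset ι) (c : ι → ℝ)
    (f : ι → Finset V → ℝ) :
    X.upDown (fun β => ∑ i ∈ u, c i * f i β) = fun a => ∑ i ∈ u, c i * X.upDown (f i) a := by
  show X.downOp (upOp fun β => ∑ i ∈ u, c i * f i β) = _
  rw [upOp_sum u c f, X.downOp_sum u c (fun i => upOp (f i))]
  rfl

lemma inn_sum_right {ι : Type*} (X : WSC V d) (m : ℕ) (u : Finset ι) (c : ι → ℝ)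
    (g : Finset V → ℝ) (F : ι → Finset V → ℝ) :
    X.inn m g (fun a => ∑ i ∈ u, c i * F i a) = ∑ i ∈ u, c i * X.inn m g (F i) := by
  unfold inn
  simp only [Finset.mul_sum]
  rw [Finset.sum_comm]
  apply Finset.sum_congr rfl; intro i _
  apply Finset.sum_congr rfl; intro a _
  ring

lemma inn_sum_left {ι : Type*} (X : WSC V d) (m : ℕ) (u : Finset ι) (c : ι → ℝ)
    (F : ι → Finset V → ℝ) (g : Finset V → ℝ) :
    X.inn m (fun a => ∑ i ∈ u, c i * F i a) g = ∑ i ∈ u, c i * X.inn m (F i) g := by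
  unfold inn
  simp only [Finset.sum_mul, Finset.mul_sum]
  rw [Finset.sum_comm]
  apply Finset.sum_congr rfl; intro i _
  apply Finset.sum_congr rfl; intro a _
  ring

end WSC


open WSC in
/-- **Theorem (general form).** Let `(X, Π)` be a weighted pure `d`-dimensional
simplicial complex, `0 ≤ k ≤ d-1` and `-1 ≤ r-1 ≤ k` (so `r` is the cardinality,
`0 ≤ r ≤ k+1`).  Then the up-down walk `P∧_k` has at most `|X(r-1)|` eigenvalues
(with multiplicity) strictly greater than `1 - (1/(k+2)) ∏_{j=r-1}^{k-1} (1-γ_j)`: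
equivalently (by self-adjointness of `P∧_k` with respect to the positive-definite
inner product `⟨·,·⟩_{Π_k}`), there is no family of `|X(r-1)| + 1` pairwise
`Π_k`-orthogonal functions of nonzero `Π_k`-norm, each of which is an eigenfunction
of `P∧_k` on `X(k)` with eigenvalue strictly greater than that threshold. -/
theorem upDown_eigenvalue_count {V : Type*} [DecidableEq V] [Fintype V] {d : ℕ}
    (X : WSC V d) (k : ℕ) (hk : k < d) (r : ℕ) (hr : r ≤ k + 1) :
    ¬ ∃ (f : Fin ((X.faces.filter (fun α => α.card = r)).card + 1) → Finset V → ℝ)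
        (μ : Fin ((X.faces.filter (fun α => α.card = r)).card + 1) → ℝ),
      (∀ i, ∀ α ∈ X.faces, α.card = k + 1 → X.upDown (f i) α = μ i * f i α) ∧
      (∀ i, X.inn (k + 1) (f i) (f i) ≠ 0) ∧
      (∀ i j, i ≠ j → X.inn (k + 1) (f i) (f j) = 0) ∧
      (∀ i, 1 - (1 / ((k : ℝ) + 2)) * ∏ m ∈ Finset.Ico r (k + 1), (1 - X.gammaC m)
        < μ i) := by
  rintro ⟨f, μ, heig, hnz, horth, hμ⟩
  classical
  set t := k + 1 - r with ht
  have hrt : r + t = k + 1 := by omega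
  have hpos : ∀ i, 0 < X.inn (k+1) (f i) (f i) := fun i =>
    lt_of_le_of_ne (X.inn_nonneg _ _) (Ne.symm (hnz i))
  -- linear dependence of the projections to level r
  have hdep : ¬ LinearIndependent ℝ (fun i : Fin ((X.faces.filter (fun α => α.card = r)).card + 1) =>
      (fun a : {x // x ∈ X.faces.filter (fun α => α.card = r)} =>
        (X.downOp)^[t] (f i) ↑a)) := by
    intro hli
    have hle := LinearIndependent.fintype_card_le_finrank hli
    rw [Module.finrank_fintype_fun_eq_card] at hle
    rw [Fintype.card_coe] at hle
    rw [Fintype.card_fin] at hle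
    omega
  rw [Fintype.not_linearIndependent_iff] at hdep
  obtain ⟨c, hc0, i₀, hi₀⟩ := hdep
  -- the combined function
  have hker : ∀ α ∈ X.faces, α.card = r →
      (X.downOp)^[t] (fun β => ∑ i, c i * f i β) α = 0 := by
    intro α hα hc
    rw [X.downOp_iter_sum t Finset.univ c f]
    have h2 := congrFun hc0 ⟨α, by simp only [Finset.mem_filter]; exact ⟨hα, hc⟩⟩
    rw [Finset.sum_apply] at h2
    simpa [smul_eq_mul] using h2
  have hclaim := X.main_claim t r (by omega) (fun β => ∑ i, c i * f i β) hker
  rw [hrt] at hclaim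
  -- rewrite LHS via adjointness
  have hadj : X.inn (k + 1 + 1) (upOp (fun β => ∑ i, c i * f i β))
        (upOp (fun β => ∑ i, c i * f i β))
      = X.inn (k + 1) (fun β => ∑ i, c i * f i β)
          (X.upDown (fun β => ∑ i, c i * f i β)) :=
    X.inn_up_down (show k + 1 ≤ d by omega) (fun β => ∑ i, c i * f i β)
      (upOp (fun β => ∑ i, c i * f i β))
  rw [hadj] at hclaim
  -- expand the eigenfunction identities
  have hev : ∀ i : Fin ((X.faces.filter (fun α => α.card = r)).card + 1), X.inn (k+1) (fun β => ∑ j, c j * f j β) (X.upDown (f i))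
      = μ i * X.inn (k+1) (fun β => ∑ j, c j * f j β) (f i) := by
    intro i
    unfold inn
    rw [Finset.mul_sum]
    apply Finset.sum_congr rfl
    intro α hα
    simp only [Finset.mem_filter] at hα
    rw [heig i α hα.1 hα.2]
    ring
  have hgf : ∀ i : Fin ((X.faces.filter (fun α => α.card = r)).card + 1), X.inn (k+1) (fun β => ∑ j, c j * f j β) (f i)
      = c i * X.inn (k+1) (f i) (f i) := by
    intro i
    rw [X.inn_sum_left (k+1) Finset.univ c f (f i)]
    rw [Finset.sum_eq_single i]
    · intro j _ hji
      rw [horth j i hji, mul_zero]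
    · intro h
      exact absurd (Finset.mem_univ i) h
  have hLHS : X.inn (k + 1) (fun β => ∑ i, c i * f i β)
        (X.upDown (fun β => ∑ i, c i * f i β))
      = ∑ i, μ i * (c i ^ 2 * X.inn (k+1) (f i) (f i)) := by
    rw [X.upDown_sum Finset.univ c f,
      X.inn_sum_right (k+1) Finset.univ c (fun β => ∑ i, c i * f i β)
        (fun i => X.upDown (f i))]
    apply Finset.sum_congr rfl
    intro i _
    rw [hev i, hgf i]
    ring
  have hRHS : X.inn (k + 1) (fun β => ∑ i, c i * f i β) (fun β => ∑ i, c i * f i β)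
      = ∑ i, c i ^ 2 * X.inn (k+1) (f i) (f i) := by
    rw [X.inn_sum_right (k+1) Finset.univ c (fun β => ∑ i, c i * f i β) f]
    apply Finset.sum_congr rfl
    intro i _
    rw [hgf i]
    ring
  rw [hLHS, hRHS] at hclaim
  have hcast : ((k + 1 : ℕ) : ℝ) + 1 = (k : ℝ) + 2 := by push_cast; ring
  rw [hcast] at hclaim
  -- derive the contradiction
  set Θ : ℝ := 1 - 1 / ((k : ℝ) + 2) * ∏ j ∈ Finset.Ico r (k + 1), (1 - X.gammaC j) with hΘ
  have hsum : ∑ i, (μ i - Θ) * (c i ^ 2 * X.inn (k+1) (f i) (f i)) ≤ 0 := by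
    have hexp : ∑ i, (μ i - Θ) * (c i ^ 2 * X.inn (k+1) (f i) (f i))
        = (∑ i, μ i * (c i ^ 2 * X.inn (k+1) (f i) (f i)))
          - Θ * ∑ i, c i ^ 2 * X.inn (k+1) (f i) (f i) := by
      rw [Finset.mul_sum, ← Finset.sum_sub_distrib]
      apply Finset.sum_congr rfl
      intro i _
      ring
    rw [hexp]
    linarith [hclaim]
  have hpos2 : 0 < ∑ i, (μ i - Θ) * (c i ^ 2 * X.inn (k+1) (f i) (f i)) := by
    apply Finset.sum_pos'
    · intro i _
      have h1 : 0 ≤ μ i - Θ := by linarith [hμ i]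
      have h2 : 0 ≤ c i ^ 2 * X.inn (k+1) (f i) (f i) :=
        mul_nonneg (sq_nonneg _) (hpos i).le
      exact mul_nonneg h1 h2
    · refine ⟨i₀, Finset.mem_univ i₀, ?_⟩
      have h1 : 0 < μ i₀ - Θ := by linarith [hμ i₀]
      have h2 : 0 < c i₀ ^ 2 * X.inn (k+1) (f i₀) (f i₀) :=
        mul_pos (by positivity) (hpos i₀)
      exact mul_pos h1 h2
  linarith
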